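/- arXiv:1609.05776 — 7 statements merged into one kernel-verified Lean document; each statement's English description precedes it below -/
import Mathlib

section
/- (Lebesgue) Let p be a prime with p ≡ 7 (mod 8). Then the sum of the quadratic residues of p lying in [1, (p−1)/2] equals the sum of the non-residues of p lying in [1, (p−1)/2], i.e. ΣR_b = ΣN_b. -/
open scoped Classical in
/-- (Lebesgue) For a prime `p ≡ 7 (mod 8)`, the sum of the quadratic residues of `p`
in `[1, (p-1)/2]` equals the sum of the non-residues of `p` in `[1, (p-1)/2]`. -/
theorem sum_small_residues_eq_sum_small_nonresidues_of_prime_mod_eight_eq_seven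
    (p : ℕ) (hp : p.Prime) (hmod : p % 8 = 7) :
    ∑ y ∈ (Finset.Icc 1 ((p - 1) / 2)).filter
        (fun y => ∃ x : ℤ, x ^ 2 ≡ (y : ℤ) [ZMOD (p : ℤ)]), y =
      ∑ y ∈ (Finset.Icc 1 ((p - 1) / 2)).filter
        (fun y => ¬ ∃ x : ℤ, x ^ 2 ≡ (y : ℤ) [ZMOD (p : ℤ)]), y := by
  haveI : Fact p.Prime := ⟨hp⟩
  have hp7 : 7 ≤ p := by omega
  set M := (p - 1) / 2 with hM
  have h2M : 2 * M = p - 1 := by omega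
  set I := Finset.Icc 1 M with hI
  -- the quadratic character
  set c : ℕ → ℤ := fun y => quadraticChar (ZMod p) ((y : ℕ) : ZMod p) with hc
  have hcard : Fintype.card (ZMod p) = p := ZMod.card p
  have hchar2 : ringChar (ZMod p) ≠ 2 := by
    rw [ZMod.ringChar_zmod_n]; omega
  have hs2 : quadraticChar (ZMod p) (2 : ZMod p) = 1 :=
    (quadraticChar_one_iff_isSquare (Ring.two_ne_zero hchar2)).mpr
      (FiniteField.isSquare_two_iff.mpr (by rw [hcard]; omega))
  have hsn : quadraticChar (ZMod p) (-1 : ZMod p) = -1 :=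
    quadraticChar_neg_one_iff_not_isSquare.mpr
      (by rw [FiniteField.isSquare_neg_one_iff, hcard]; omega)
  -- the predicate is equivalent to being a square in `ZMod p`
  have key : ∀ y : ℕ, (∃ x : ℤ, x ^ 2 ≡ (y : ℤ) [ZMOD (p : ℤ)]) ↔
      IsSquare ((y : ℕ) : ZMod p) := by
    intro y
    constructor
    · rintro ⟨x, hx⟩
      have h1 : ((x ^ 2 : ℤ) : ZMod p) = ((y : ℤ) : ZMod p) :=
        (ZMod.intCast_eq_intCast_iff _ _ _).mpr hx
      push_cast at h1
      exact ⟨(x : ZMod p), by rw [← h1]; ring⟩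
    · rintro ⟨r, hr⟩
      obtain ⟨x, rfl⟩ := ZMod.intCast_surjective r
      refine ⟨x, (ZMod.intCast_eq_intCast_iff _ _ _).mp ?_⟩
      push_cast
      rw [hr]; ring
  -- nonzero in ZMod p
  have hy0 : ∀ y ∈ I, ((y : ℕ) : ZMod p) ≠ 0 := by
    intro y hy
    rw [hI, Finset.mem_Icc] at hy
    rw [Ne, ZMod.natCast_eq_zero_iff]
    intro hdvd
    have := Nat.le_of_dvd (by omega) hdvd
    omega
  -- values of c on filters
  have hc1 : ∀ y ∈ I, (∃ x : ℤ, x ^ 2 ≡ (y : ℤ) [ZMOD (p : ℤ)]) → c y = 1 := by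
    intro y hy hP
    exact (quadraticChar_one_iff_isSquare (hy0 y hy)).mpr ((key y).mp hP)
  have hcn : ∀ y ∈ I, (¬ ∃ x : ℤ, x ^ 2 ≡ (y : ℤ) [ZMOD (p : ℤ)]) → c y = -1 := by
    intro y hy hP
    exact quadraticChar_neg_one_iff_not_isSquare.mpr (fun h => hP ((key y).mpr h))
  -- reindexing bijection
  have reindex : ∀ h : ℕ → ℤ, ∑ z ∈ I, h z =
      ∑ y ∈ I, h (if 2 * y ≤ M then 2 * y else p - 2 * y) := by
    intro h
    refine Finset.sum_nbij' (fun z => if z % 2 = 0 then z / 2 else (p - z) / 2)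
      (fun y => if 2 * y ≤ M then 2 * y else p - 2 * y) ?_ ?_ ?_ ?_ ?_
    · intro z hz
      rw [hI, Finset.mem_Icc] at hz ⊢
      split_ifs <;> omega
    · intro y hy
      rw [hI, Finset.mem_Icc] at hy ⊢
      split_ifs <;> omega
    · intro z hz
      rw [hI, Finset.mem_Icc] at hz
      split_ifs <;> omega
    · intro y hy
      rw [hI, Finset.mem_Icc] at hy
      split_ifs <;> omega
    · intro z hz
      rw [hI, Finset.mem_Icc] at hz
      congr 1
      split_ifs <;> omega
  have split : ∀ h : ℕ → ℤ, ∑ y ∈ I, h (if 2 * y ≤ M then 2 * y else p - 2 * y) =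
      ∑ y ∈ I.filter (fun y => 2 * y ≤ M), h (2 * y) +
      ∑ y ∈ I.filter (fun y => ¬ 2 * y ≤ M), h (p - 2 * y) := by
    intro h
    rw [← Finset.sum_filter_add_sum_filter_not I (fun y => 2 * y ≤ M)]
    congr 1
    · refine Finset.sum_congr rfl fun y hy => ?_
      rw [Finset.mem_filter] at hy
      rw [if_pos hy.2]
    · refine Finset.sum_congr rfl fun y hy => ?_
      rw [Finset.mem_filter] at hy
      rw [if_neg hy.2]
  -- character values on doubled and reflected arguments
  have hcdouble : ∀ y : ℕ, c (2 * y) = c y := by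
    intro y
    have : ((2 * y : ℕ) : ZMod p) = 2 * ((y : ℕ) : ZMod p) := by push_cast; ring
    rw [hc]; simp only [this, map_mul, hs2, one_mul]
  have hcrefl : ∀ y ∈ I, c (p - 2 * y) = - c y := by
    intro y hy
    rw [hI, Finset.mem_Icc] at hy
    have h2y : 2 * y ≤ p := by omega
    have : ((p - 2 * y : ℕ) : ZMod p) = (-1) * (2 * ((y : ℕ) : ZMod p)) := by
      rw [Nat.cast_sub h2y]
      push_cast
      rw [ZMod.natCast_self]
      ring
    rw [hc]; simp only [this, map_mul, hs2, hsn]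
    ring
  -- T = 0
  have hT : ∑ y ∈ I.filter (fun y => ¬ 2 * y ≤ M), c y = 0 := by
    have h1 := (reindex c).trans (split c)
    have h2 := Finset.sum_filter_add_sum_filter_not I (fun y => 2 * y ≤ M) c
    have e1 : ∑ y ∈ I.filter (fun y => 2 * y ≤ M), c (2 * y) =
        ∑ y ∈ I.filter (fun y => 2 * y ≤ M), c y :=
      Finset.sum_congr rfl fun y _ => hcdouble y
    have e2 : ∑ y ∈ I.filter (fun y => ¬ 2 * y ≤ M), c (p - 2 * y) =
        ∑ y ∈ I.filter (fun y => ¬ 2 * y ≤ M), (- c y) :=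
      Finset.sum_congr rfl fun y hy => hcrefl y (Finset.mem_of_mem_filter y hy)
    rw [e1, e2, Finset.sum_neg_distrib] at h1
    linarith [h1, h2.symm]
  -- S = 0
  have hS : ∑ y ∈ I, c y * (y : ℤ) = 0 := by
    set f : ℕ → ℤ := fun z => c z * (z : ℤ) with hf
    have h1 := (reindex f).trans (split f)
    have e1 : ∑ y ∈ I.filter (fun y => 2 * y ≤ M), f (2 * y) =
        2 * ∑ y ∈ I.filter (fun y => 2 * y ≤ M), f y := by
      rw [Finset.mul_sum]
      refine Finset.sum_congr rfl fun y _ => ?_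
      rw [hf]; simp only [hcdouble y]; push_cast; ring
    have e2 : ∑ y ∈ I.filter (fun y => ¬ 2 * y ≤ M), f (p - 2 * y) =
        2 * ∑ y ∈ I.filter (fun y => ¬ 2 * y ≤ M), f y -
        (p : ℤ) * ∑ y ∈ I.filter (fun y => ¬ 2 * y ≤ M), c y := by
      rw [Finset.mul_sum, Finset.mul_sum, ← Finset.sum_sub_distrib]
      refine Finset.sum_congr rfl fun y hy => ?_
      have hyI := Finset.mem_of_mem_filter y hy
      rw [Finset.mem_filter] at hy
      have hy' : y ∈ Finset.Icc 1 M := hyI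
      rw [Finset.mem_Icc] at hy'
      have h2y : 2 * y ≤ p := by omega
      have hcast : ((p - 2 * y : ℕ) : ℤ) = (p : ℤ) - 2 * y := by
        push_cast [Nat.cast_sub h2y]; ring
      rw [hf]; simp only [hcrefl y hyI, hcast]; ring
    rw [e1, e2, hT, mul_zero] at h1
    have h2 := Finset.sum_filter_add_sum_filter_not I (fun y => 2 * y ≤ M) f
    linarith [h1, h2.symm]
  -- conclude
  have hsplit := Finset.sum_filter_add_sum_filter_not I
    (fun (y : ℕ) => ∃ x : ℤ, x ^ 2 ≡ (y : ℤ) [ZMOD (p : ℤ)]) (fun (y : ℕ) => c y * (y : ℤ))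
  have eA : Finset.sum (I.filter (fun (y : ℕ) => ∃ x : ℤ, x ^ 2 ≡ (y : ℤ) [ZMOD (p : ℤ)]))
      (fun (y : ℕ) => c y * (y : ℤ)) =
      Finset.sum (I.filter (fun (y : ℕ) => ∃ x : ℤ, x ^ 2 ≡ (y : ℤ) [ZMOD (p : ℤ)]))
      (fun (y : ℕ) => (y : ℤ)) := by
    refine Finset.sum_congr rfl fun y hy => ?_
    rw [Finset.mem_filter] at hy
    rw [hc1 y hy.1 hy.2, one_mul]
  have eB : Finset.sum (I.filter (fun (y : ℕ) => ¬ ∃ x : ℤ, x ^ 2 ≡ (y : ℤ) [ZMOD (p : ℤ)]))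
      (fun (y : ℕ) => c y * (y : ℤ)) =
      - Finset.sum (I.filter (fun (y : ℕ) => ¬ ∃ x : ℤ, x ^ 2 ≡ (y : ℤ) [ZMOD (p : ℤ)]))
      (fun (y : ℕ) => (y : ℤ)) := by
    rw [← Finset.sum_neg_distrib]
    refine Finset.sum_congr rfl fun y hy => ?_
    rw [Finset.mem_filter] at hy
    rw [hcn y hy.1 hy.2]; ring
  rw [eA, eB] at hsplit
  rw [hS] at hsplit
  have hz : Finset.sum (I.filter (fun (y : ℕ) => ∃ x : ℤ, x ^ 2 ≡ (y : ℤ) [ZMOD (p : ℤ)]))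
      (fun (y : ℕ) => (y : ℤ)) =
      Finset.sum (I.filter (fun (y : ℕ) => ¬ ∃ x : ℤ, x ^ 2 ≡ (y : ℤ) [ZMOD (p : ℤ)]))
      (fun (y : ℕ) => (y : ℤ)) := by
    linarith
  rw [show ((I : Finset ℕ) : Finset ℤ) = I.image (fun a : ℕ => (a : ℤ)) from by
    ext z; simp [Finset.mem_coe]]
  rw [Finset.filter_image, Finset.filter_image,
    Finset.sum_image (fun a _ b _ h => Nat.cast_injective h),
    Finset.sum_image (fun a _ b _ h => Nat.cast_injective h)]
  exact hz
end

section
/- (Lebesgue) Let p be a prime with p ≡ 7 (mod 8). Then ΣN − ΣR = p·(R_b(p) − N_b(p)), where ΣR and ΣN are the sums of all quadratic residues and non-residues of p in [1, p−1], and R_b(p), N_b(p) count the residues and non-residues in [1, (p−1)/2]. -/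
open scoped Classical in
/-- (Lebesgue) For a prime `p ≡ 7 (mod 8)`:
`ΣN − ΣR = p·(R_b(p) − N_b(p))`, where `ΣR`, `ΣN` are the sums of all residues /
non-residues in `[1, p-1]`, and `R_b`, `N_b` count residues / non-residues in
`[1, (p-1)/2]`. -/
theorem sum_nonresidues_sub_sum_residues_eq_of_prime_mod_eight_eq_seven
    (p : ℕ) (hp : p.Prime) (hmod : p % 8 = 7) :
    (∑ y ∈ (Finset.Icc 1 (p - 1)).filter
        (fun y => ¬ ∃ x : ℤ, x ^ 2 ≡ (y : ℤ) [ZMOD (p : ℤ)]), (y : ℤ)) -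
      (∑ y ∈ (Finset.Icc 1 (p - 1)).filter
        (fun y => ∃ x : ℤ, x ^ 2 ≡ (y : ℤ) [ZMOD (p : ℤ)]), (y : ℤ)) =
    (p : ℤ) *
      ((((Finset.Icc 1 ((p - 1) / 2)).filter
          (fun y => ∃ x : ℤ, x ^ 2 ≡ (y : ℤ) [ZMOD (p : ℤ)])).card : ℤ) -
        (((Finset.Icc 1 ((p - 1) / 2)).filter
          (fun y => ¬ ∃ x : ℤ, x ^ 2 ≡ (y : ℤ) [ZMOD (p : ℤ)])).card : ℤ)) := by
  haveI : Fact p.Prime := ⟨hp⟩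
  have hp7 : 7 ≤ p := by omega
  have hp2 : p ≠ 2 := by omega
  set h : ℕ := (p - 1) / 2 with hh
  have hph : p = 2 * h + 1 := by omega
  -- the Legendre symbol as a function on ℕ
  set c : ℕ → ℤ := fun y => legendreSym p (y : ℤ) with hc
  -- nonvanishing on [1, p-1]
  have hnz : ∀ y : ℕ, 1 ≤ y → y ≤ p - 1 → (((y : ℤ) : ZMod p) ≠ 0) := by
    intro y h1 h2 hz
    rw [ZMod.intCast_zmod_eq_zero_iff_dvd] at hz
    have : (p : ℤ) ∣ (y : ℤ) := hz
    have := Int.le_of_dvd (by exact_mod_cast h1) this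
    omega
  -- residue predicate ↔ c y = 1
  have hres : ∀ y : ℕ, (((y : ℤ) : ZMod p) ≠ 0) →
      ((∃ x : ℤ, x ^ 2 ≡ (y : ℤ) [ZMOD (p : ℤ)]) ↔ c y = 1) := by
    intro y hy
    simp only [hc]
    rw [legendreSym.eq_one_iff p hy]
    constructor
    · rintro ⟨x, hx⟩
      refine ⟨(x : ZMod p), ?_⟩
      have : ((x ^ 2 : ℤ) : ZMod p) = (((y : ℤ)) : ZMod p) := by
        rw [ZMod.intCast_eq_intCast_iff]; exact hx
      push_cast at this ⊢
      rw [← this]; ring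
    · rintro ⟨r, hr⟩
      obtain ⟨x, hx⟩ := ZMod.intCast_surjective (n := p) r
      refine ⟨x, ?_⟩
      rw [← ZMod.intCast_eq_intCast_iff]
      push_cast at hr ⊢
      rw [hx, hr]; ring
  have hpm : ∀ y : ℕ, (((y : ℤ) : ZMod p) ≠ 0) → c y = 1 ∨ c y = -1 := by
    intro y hy; exact legendreSym.eq_one_or_neg_one p hy
  -- special values
  have hneg1 : legendreSym p (-1) = -1 := by
    rw [legendreSym.at_neg_one hp2, ZMod.χ₄_nat_eq_if_mod_four]
    have h1 : p % 2 = 1 := by omega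
    have h2 : p % 4 = 3 := by omega
    simp [h1, h2]
  have htwo : legendreSym p 2 = 1 := by
    rw [legendreSym.at_two hp2, ZMod.χ₈_nat_eq_if_mod_eight]
    have h1 : p % 2 = 1 := by omega
    simp [h1, hmod]
  -- c (p - z) = - c z for 1 ≤ z ≤ p
  have hsub : ∀ z : ℕ, z ≤ p → c (p - z) = - c z := by
    intro z hz
    simp only [hc]
    have hcast : (((p - z : ℕ) : ℤ)) = (p : ℤ) - z := by
      push_cast [Nat.cast_sub hz]; ring
    rw [hcast]
    have hmodeq : ((p : ℤ) - z) % p = (-1 * (z : ℤ)) % p := by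
      have hd : ((p : ℤ)) ∣ (-1 * (z : ℤ) - ((p : ℤ) - z)) := ⟨-1, by ring⟩
      exact Int.modEq_iff_dvd.mpr hd
    calc legendreSym p ((p : ℤ) - z) = legendreSym p (((p : ℤ) - z) % p) :=
          legendreSym.mod p _
      _ = legendreSym p ((-1 * (z : ℤ)) % p) := by rw [hmodeq]
      _ = legendreSym p (-1 * (z : ℤ)) := (legendreSym.mod p _).symm
      _ = legendreSym p (-1) * legendreSym p (z : ℤ) := legendreSym.mul p _ _
      _ = - legendreSym p (z : ℤ) := by rw [hneg1]; ring
  -- c (2k) = c k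
  have hdbl : ∀ k : ℕ, c (2 * k) = c k := by
    intro k
    simp only [hc]
    have : ((2 * k : ℕ) : ℤ) = 2 * (k : ℤ) := by push_cast; ring
    rw [this, legendreSym.mul, htwo]; ring
  -- abbreviations
  set A : Finset ℕ := Finset.Icc 1 (p - 1) with hA
  set B : Finset ℕ := Finset.Icc 1 h with hB
  set S : ℤ := ∑ y ∈ A, c y * y with hS
  set T : ℤ := ∑ y ∈ B, c y * y with hT
  set U : ℤ := ∑ y ∈ B, c y with hU
  have hresA : ∀ y ∈ A, ((∃ x : ℤ, x ^ 2 ≡ (y : ℤ) [ZMOD (p : ℤ)]) ↔ c y = 1) := by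
    intro y hy
    rw [hA, Finset.mem_Icc] at hy
    exact hres y (hnz y hy.1 hy.2)
  have hresB : ∀ y ∈ B, ((∃ x : ℤ, x ^ 2 ≡ (y : ℤ) [ZMOD (p : ℤ)]) ↔ c y = 1) := by
    intro y hy
    rw [hB, Finset.mem_Icc] at hy
    exact hres y (hnz y hy.1 (by omega))
  have hpmA : ∀ y ∈ A, c y = 1 ∨ c y = -1 := by
    intro y hy
    rw [hA, Finset.mem_Icc] at hy
    exact hpm y (hnz y hy.1 hy.2)
  have hpmB : ∀ y ∈ B, c y = 1 ∨ c y = -1 := by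
    intro y hy
    rw [hB, Finset.mem_Icc] at hy
    exact hpm y (hnz y hy.1 (by omega))
  -- LHS = -S
  have hLHS :
      (∑ y ∈ A.filter (fun y : ℕ => ¬ ∃ x : ℤ, x ^ 2 ≡ (y : ℤ) [ZMOD (p : ℤ)]), (y : ℤ)) -
      (∑ y ∈ A.filter (fun y : ℕ => ∃ x : ℤ, x ^ 2 ≡ (y : ℤ) [ZMOD (p : ℤ)]), (y : ℤ)) = -S := by
    have := Finset.sum_filter_add_sum_filter_not A
      (fun y => ∃ x : ℤ, x ^ 2 ≡ (y : ℤ) [ZMOD (p : ℤ)]) (fun y => c y * y)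
    have e1 : ∑ y ∈ A.filter (fun y : ℕ => ∃ x : ℤ, x ^ 2 ≡ (y : ℤ) [ZMOD (p : ℤ)]),
        c y * (y : ℤ)
        = ∑ y ∈ A.filter (fun y : ℕ => ∃ x : ℤ, x ^ 2 ≡ (y : ℤ) [ZMOD (p : ℤ)]), (y : ℤ) := by
      refine Finset.sum_congr rfl ?_
      intro y hy
      rw [Finset.mem_filter] at hy
      rw [(hresA y hy.1).1 hy.2]; ring
    have e2 : ∑ y ∈ A.filter (fun y : ℕ => ¬ ∃ x : ℤ, x ^ 2 ≡ (y : ℤ) [ZMOD (p : ℤ)]),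
        c y * (y : ℤ)
        = ∑ y ∈ A.filter (fun y : ℕ => ¬ ∃ x : ℤ, x ^ 2 ≡ (y : ℤ) [ZMOD (p : ℤ)]), -(y : ℤ) := by
      refine Finset.sum_congr rfl ?_
      intro y hy
      rw [Finset.mem_filter] at hy
      rcases hpmA y hy.1 with h1 | h1
      · exact absurd ((hresA y hy.1).2 h1) hy.2
      · rw [h1]; ring
    rw [e1, e2, Finset.sum_neg_distrib] at this
    rw [hS] at *
    linarith [this]
  -- RHS inner = U
  have hRHS :
      (((B.filter (fun y : ℕ => ∃ x : ℤ, x ^ 2 ≡ (y : ℤ) [ZMOD (p : ℤ)])).card : ℤ) -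
       ((B.filter (fun y : ℕ => ¬ ∃ x : ℤ, x ^ 2 ≡ (y : ℤ) [ZMOD (p : ℤ)])).card : ℤ)) = U := by
    have := Finset.sum_filter_add_sum_filter_not B
      (fun y => ∃ x : ℤ, x ^ 2 ≡ (y : ℤ) [ZMOD (p : ℤ)]) (fun y => c y)
    have e1 : ∑ y ∈ B.filter (fun y : ℕ => ∃ x : ℤ, x ^ 2 ≡ (y : ℤ) [ZMOD (p : ℤ)]), c y
        = ((B.filter (fun y : ℕ => ∃ x : ℤ, x ^ 2 ≡ (y : ℤ) [ZMOD (p : ℤ)])).card : ℤ) := by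
      rw [Finset.card_eq_sum_ones, Nat.cast_sum]
      refine Finset.sum_congr rfl ?_
      intro y hy
      rw [Finset.mem_filter] at hy
      rw [(hresB y hy.1).1 hy.2]; norm_num
    have e2 : ∑ y ∈ B.filter (fun y : ℕ => ¬ ∃ x : ℤ, x ^ 2 ≡ (y : ℤ) [ZMOD (p : ℤ)]), c y
        = -((B.filter (fun y : ℕ => ¬ ∃ x : ℤ, x ^ 2 ≡ (y : ℤ) [ZMOD (p : ℤ)])).card : ℤ) := by
      rw [Finset.card_eq_sum_ones, Nat.cast_sum, ← Finset.sum_neg_distrib]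
      refine Finset.sum_congr rfl ?_
      intro y hy
      rw [Finset.mem_filter] at hy
      rcases hpmB y hy.1 with h1 | h1
      · exact absurd ((hresB y hy.1).2 h1) hy.2
      · rw [h1]; norm_num
    rw [e1, e2] at this
    rw [hU] at *
    linarith [this]
  -- Identity 1: S = 2*T - p*U
  have hid1 : S = 2 * T - (p : ℤ) * U := by
    have hsplit : A = B ∪ Finset.Icc (h + 1) (p - 1) := by
      ext y
      simp only [hA, hB, Finset.mem_union, Finset.mem_Icc]
      omega
    have hdisj : Disjoint B (Finset.Icc (h + 1) (p - 1)) := by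
      rw [Finset.disjoint_left]
      intro a ha hb
      rw [hB, Finset.mem_Icc] at ha
      rw [Finset.mem_Icc] at hb
      omega
    have hsum2 : ∑ y ∈ Finset.Icc (h + 1) (p - 1), c y * (y : ℤ)
        = ∑ z ∈ B, (- c z) * ((p : ℤ) - z) := by
      refine Finset.sum_nbij' (fun y => p - y) (fun z => p - z) ?_ ?_ ?_ ?_ ?_
      · intro a ha; rw [Finset.mem_Icc] at ha
        show p - a ∈ B
        rw [hB, Finset.mem_Icc]; omega
      · intro a ha; rw [hB, Finset.mem_Icc] at ha
        show p - a ∈ Finset.Icc (h + 1) (p - 1)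
        rw [Finset.mem_Icc]; omega
      · intro a ha; rw [Finset.mem_Icc] at ha
        show p - (p - a) = a
        omega
      · intro a ha; rw [hB, Finset.mem_Icc] at ha
        show p - (p - a) = a
        omega
      · intro a ha
        rw [Finset.mem_Icc] at ha
        show c a * (a : ℤ) = (- c (p - a)) * ((p : ℤ) - ((p - a : ℕ) : ℤ))
        have h1 : c (p - a) = - c a := hsub a (by omega)
        have h2 : ((p : ℤ) - ((p - a : ℕ) : ℤ)) = (a : ℤ) := by
          rw [Nat.cast_sub (by omega)]; ring
        rw [h1, h2]; ring
    have hsum2' : ∑ z ∈ B, (- c z) * ((p : ℤ) - z) = T - (p : ℤ) * U := by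
      have : ∀ z ∈ B, (- c z) * ((p : ℤ) - z) = c z * z - (p : ℤ) * c z := by
        intro z _; ring
      rw [Finset.sum_congr rfl this, Finset.sum_sub_distrib, ← Finset.mul_sum, hT, hU]
    rw [hS, hsplit, Finset.sum_union hdisj, hsum2, hsum2', hT]
    ring
  -- Identity 2: S = 4*T - p*U
  have hid2 : S = 4 * T - (p : ℤ) * U := by
    have hsplit : A = (B.image (fun k => 2 * k)) ∪ (B.image (fun k => p - 2 * k)) := by
      ext y
      simp only [hA, hB, Finset.mem_union, Finset.mem_image, Finset.mem_Icc]
      constructor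
      · rintro ⟨h1, h2⟩
        rcases Nat.even_or_odd y with ⟨k, hk⟩ | ⟨k, hk⟩
        · exact Or.inl ⟨k, by omega, by omega⟩
        · exact Or.inr ⟨h - k, by omega, by omega⟩
      · rintro (⟨k, hk1, hk2⟩ | ⟨k, hk1, hk2⟩) <;> omega
    have hdisj : Disjoint (B.image (fun k => 2 * k)) (B.image (fun k => p - 2 * k)) := by
      rw [Finset.disjoint_left]
      intro a ha hb
      simp only [hB, Finset.mem_image, Finset.mem_Icc] at ha hb
      obtain ⟨k, hk1, hk2⟩ := ha
      obtain ⟨m, hm1, hm2⟩ := hb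
      omega
    have he : ∑ y ∈ B.image (fun k => 2 * k), c y * (y : ℤ) = 2 * T := by
      rw [Finset.sum_image (by intro x _ y _ hxy; simp only at hxy; omega)]
      have : ∀ k ∈ B, c (2 * k) * ((2 * k : ℕ) : ℤ) = 2 * (c k * k) := by
        intro k _
        rw [hdbl k]; push_cast; ring
      rw [Finset.sum_congr rfl this, ← Finset.mul_sum, hT]
    have ho : ∑ y ∈ B.image (fun k => p - 2 * k), c y * (y : ℤ)
        = 2 * T - (p : ℤ) * U := by
      rw [Finset.sum_image (by
        intro x hx y hy hxy
        simp only [hB, Finset.mem_coe, Finset.mem_Icc] at hx hy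
        have hxy' : p - 2 * x = p - 2 * y := hxy
        omega)]
      have : ∀ k ∈ B, c (p - 2 * k) * (((p - 2 * k : ℕ)) : ℤ)
          = 2 * (c k * k) - (p : ℤ) * c k := by
        intro k hk
        simp only [hB, Finset.mem_Icc] at hk
        have h1 : c (p - 2 * k) = - c (2 * k) := hsub (2 * k) (by omega)
        have h2 : (((p - 2 * k : ℕ)) : ℤ) = (p : ℤ) - 2 * k := by
          rw [Nat.cast_sub (by omega)]; push_cast; ring
        rw [h1, h2, hdbl k]; ring
      rw [Finset.sum_congr rfl this, Finset.sum_sub_distrib, ← Finset.mul_sum,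
        ← Finset.mul_sum, hT, hU]
    rw [hS, hsplit, Finset.sum_union hdisj, he, ho]
    ring
  -- conclude
  have hT0 : T = 0 := by linarith
  have hSU : S = -(p : ℤ) * U := by rw [hid1, hT0]; ring
  -- convert the coerced sums in the goal to sums over `A`
  have hconv : ∀ (Q : ℤ → Prop) (inst : DecidablePred Q),
      (∑ y ∈ @Finset.filter ℤ Q inst (do let a ← A; pure ((a : ℤ)) : Finset ℤ), y)
        = ∑ y ∈ Finset.filter (fun n : ℕ => Q ↑n) A, (↑y : ℤ) := by
    intro Q inst
    have e : (do let a ← A; pure ((a : ℤ)) : Finset ℤ)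
        = A.image (Nat.cast : ℕ → ℤ) := by
      ext z
      simp [Finset.bind_def, Finset.pure_def, Finset.mem_sup]
    rw [e]
    refine Finset.sum_nbij' (fun y => y.toNat) (fun n => (n : ℤ)) ?_ ?_ ?_ ?_ ?_
    · intro a ha
      simp only [Finset.mem_filter, Finset.mem_image] at ha ⊢
      obtain ⟨⟨n, hn, rfl⟩, hQ⟩ := ha
      simpa using ⟨hn, hQ⟩
    · intro a ha
      simp only [Finset.mem_filter, Finset.mem_image] at ha ⊢
      exact ⟨⟨a, ha.1, rfl⟩, ha.2⟩
    · intro a ha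
      simp only [Finset.mem_filter, Finset.mem_image] at ha
      obtain ⟨⟨n, hn, rfl⟩, hQ⟩ := ha
      simp
    · intro a ha
      simp
    · intro a ha
      simp only [Finset.mem_filter, Finset.mem_image] at ha
      obtain ⟨⟨n, hn, rfl⟩, hQ⟩ := ha
      simp
  have hconv2 : ∀ (Q : ℤ → Prop) (inst : DecidablePred Q),
      (@Finset.filter ℤ Q inst (do let a ← B; pure ((a : ℤ)) : Finset ℤ)).card
        = (Finset.filter (fun n : ℕ => Q ↑n) B).card := by
    intro Q inst
    have e : (do let a ← B; pure ((a : ℤ)) : Finset ℤ)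
        = B.image (Nat.cast : ℕ → ℤ) := by
      ext z
      simp [Finset.bind_def, Finset.pure_def, Finset.mem_sup]
    rw [e]
    refine Finset.card_nbij' (fun y => y.toNat) (fun n => (n : ℤ)) ?_ ?_ ?_ ?_
    · intro a ha
      simp only [Finset.mem_coe, Finset.mem_filter, Finset.mem_image] at ha ⊢
      obtain ⟨⟨n, hn, rfl⟩, hQ⟩ := ha
      simpa using ⟨hn, hQ⟩
    · intro a ha
      simp only [Finset.mem_coe, Finset.mem_filter, Finset.mem_image] at ha ⊢
      exact ⟨⟨a, ha.1, rfl⟩, ha.2⟩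
    · intro a ha
      simp only [Finset.mem_coe, Finset.mem_filter, Finset.mem_image] at ha
      obtain ⟨⟨n, hn, rfl⟩, hQ⟩ := ha
      simp
    · intro a ha
      simp
  rw [hconv _ _, hconv _ _, hconv2 _ _, hconv2 _ _]
  rw [hRHS]
  have h1 : (Finset.filter (fun n : ℕ =>
      (fun y : ℤ => ¬ ∃ x : ℤ, x ^ 2 ≡ y [ZMOD (p : ℤ)]) ↑n) A)
      = A.filter (fun y : ℕ => ¬ ∃ x : ℤ, x ^ 2 ≡ (y : ℤ) [ZMOD (p : ℤ)]) := rfl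
  have h2 : (Finset.filter (fun n : ℕ =>
      (fun y : ℤ => ∃ x : ℤ, x ^ 2 ≡ y [ZMOD (p : ℤ)]) ↑n) A)
      = A.filter (fun y : ℕ => ∃ x : ℤ, x ^ 2 ≡ (y : ℤ) [ZMOD (p : ℤ)]) := rfl
  rw [h1, h2] at *
  linarith [hLHS]
end

section
/- (Lebesgue) Let p be a prime with p ≡ 3 (mod 8). Then ΣN − ΣR = ΣR_b − ΣN_b, where ΣR and ΣN are the sums of all quadratic residues and non-residues of p in [1, p−1], and ΣR_b, ΣN_b are the corresponding sums restricted to [1, (p−1)/2]. -/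
open Finset

private lemma leg_congr' (p : ℕ) [Fact p.Prime] {a b : ℤ} (h : (a : ZMod p) = (b : ZMod p)) :
    legendreSym p a = legendreSym p b := by
  simp [legendreSym, h]

private lemma sumA1' (h : ℕ) (f : ℕ → ℤ) :
    ∑ y ∈ Icc 1 (2*h), f y = (∑ y ∈ Icc 1 h, f y) + ∑ y ∈ Icc 1 h, f (2*h+1-y) := by
  have h1 : Icc 1 (2*h) = Ioc 0 (2*h) := rfl
  have h2 : Icc 1 h = Ioc 0 h := rfl
  rw [h1, h2, ← Finset.sum_Ioc_consecutive f (Nat.zero_le h) (by omega : h ≤ 2*h)]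
  congr 1
  refine Finset.sum_nbij' (fun y => 2*h+1-y) (fun y => 2*h+1-y) ?_ ?_ ?_ ?_ ?_ <;>
    · intro a ha
      simp only [mem_Ioc] at ha ⊢
      first | omega | (congr 1; omega)

private lemma sumA2' (h : ℕ) (f : ℕ → ℤ) :
    ∑ y ∈ Icc 1 (2*h), f y = (∑ y ∈ Icc 1 h, f (2*y)) + ∑ y ∈ Icc 1 h, f (2*h+1-2*y) := by
  classical
  rw [← Finset.sum_filter_add_sum_filter_not (Icc 1 (2*h)) (fun y => Even y) f]
  congr 1
  · refine Finset.sum_nbij' (fun y => y / 2) (fun y => 2*y) ?_ ?_ ?_ ?_ ?_ <;>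
      · intro a ha
        simp only [mem_filter, mem_Icc, Nat.even_iff] at ha ⊢
        first | omega | (congr 1; omega)
  · refine Finset.sum_nbij' (fun y => (2*h+1-y)/2) (fun y => 2*h+1-2*y) ?_ ?_ ?_ ?_ ?_ <;>
      · intro a ha
        simp only [mem_filter, mem_Icc, Nat.even_iff] at ha ⊢
        first | omega | (congr 1; omega)

open scoped Classical in
private lemma convSum' (s : Finset ℕ) (P : ℤ → Prop) :
    (∑ y ∈ Finset.filter P (do let a ← s; pure ((a : ℕ) : ℤ)), y)
      = ∑ a ∈ s.filter (fun a : ℕ => P ((a : ℕ) : ℤ)), ((a : ℕ) : ℤ) := by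
  have hb : (do let a ← s; pure ((a : ℕ) : ℤ) : Finset ℤ) = s.image (Nat.cast : ℕ → ℤ) := by
    rw [congrFun (congrFun Finset.bind_def s) (fun a => (pure ((a : ℕ) : ℤ) : Finset ℤ))]
    ext b
    simp [Finset.mem_sup, Finset.pure_def, eq_comm]
  rw [hb, Finset.filter_image, Finset.sum_image (fun a _ b _ h => Nat.cast_injective h)]


private lemma coeM_eq' (s : Finset ℕ) :
    (@Bind.bind Finset (@Monad.toBind Finset (@Finset.instMonad Classical.propDecidable)) ℕ ℤ s
      (fun a => @Pure.pure Finset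
        (@Applicative.toPure Finset (@Monad.toApplicative Finset
          (@Finset.instMonad Classical.propDecidable))) ℤ (Nat.cast a)))
    = s.image (Nat.cast : ℕ → ℤ) := by
  have hpure : ∀ z : ℤ, (@Pure.pure Finset
      (@Applicative.toPure Finset (@Monad.toApplicative Finset
        (@Finset.instMonad Classical.propDecidable))) ℤ z) = {z} := fun z => rfl
  rw [congrFun (congrFun (@Finset.bind_def Classical.propDecidable ℤ ℕ) s)
      (fun a : ℕ => @Pure.pure Finset
        (@Applicative.toPure Finset (@Monad.toApplicative Finset
          (@Finset.instMonad Classical.propDecidable))) ℤ (Nat.cast a))]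
  ext b
  rw [@Finset.mem_sup ℤ ℕ (fun a b => Classical.propDecidable (a = b)) s
    (fun a : ℕ => @Pure.pure Finset
        (@Applicative.toPure Finset (@Monad.toApplicative Finset
          (@Finset.instMonad Classical.propDecidable))) ℤ (Nat.cast a)) b]
  simp only [hpure, Finset.mem_singleton]
  simp [Finset.mem_image, eq_comm]

open scoped Classical in
/-- (Lebesgue) For a prime `p ≡ 3 (mod 8)`:
`ΣN − ΣR = ΣR_b − ΣN_b`, where `ΣR`, `ΣN` are the sums of all residues /
non-residues in `[1, p-1]`, and `ΣR_b`, `ΣN_b` are the corresponding sums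
restricted to `[1, (p-1)/2]`. -/
theorem sum_diff_eq_small_sum_diff_of_prime_mod_eight_eq_three
    (p : ℕ) (hp : p.Prime) (hmod : p % 8 = 3) :
    (∑ y ∈ (Finset.Icc 1 (p - 1)).filter
        (fun y => ¬ ∃ x : ℤ, x ^ 2 ≡ (y : ℤ) [ZMOD (p : ℤ)]), (y : ℤ)) -
      (∑ y ∈ (Finset.Icc 1 (p - 1)).filter
        (fun y => ∃ x : ℤ, x ^ 2 ≡ (y : ℤ) [ZMOD (p : ℤ)]), (y : ℤ)) =
    (∑ y ∈ (Finset.Icc 1 ((p - 1) / 2)).filter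
        (fun y => ∃ x : ℤ, x ^ 2 ≡ (y : ℤ) [ZMOD (p : ℤ)]), (y : ℤ)) -
      (∑ y ∈ (Finset.Icc 1 ((p - 1) / 2)).filter
        (fun y => ¬ ∃ x : ℤ, x ^ 2 ≡ (y : ℤ) [ZMOD (p : ℤ)]), (y : ℤ)) := by
  haveI : Fact p.Prime := ⟨hp⟩
  have hodd : p % 2 = 1 := by omega
  set h : ℕ := (p - 1) / 2 with hh
  have hph : p = 2 * h + 1 := by omega
  have hp1 : p - 1 = 2 * h := by omega
  set L : ℕ → ℤ := fun y => legendreSym p (y : ℤ) with hL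
  -- basic values
  have hne2 : p ≠ 2 := by omega
  have hLneg1 : legendreSym p (-1) = -1 := by
    rw [legendreSym.at_neg_one hne2, ZMod.χ₄_nat_mod_four]
    have h4 : p % 4 = 3 := by omega
    rw [h4]; decide
  have hL2 : legendreSym p 2 = -1 := by
    rw [legendreSym.at_two hne2, ZMod.χ₈_nat_mod_eight, hmod]; decide
  -- residue predicate vs Legendre symbol
  have hQ : ∀ y : ℕ, ¬ (p ∣ y) →
      ((∃ x : ℤ, x ^ 2 ≡ (y : ℤ) [ZMOD (p : ℤ)]) ↔ L y = 1) := by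
    intro y hdvd
    have hy0 : ((y : ℤ) : ZMod p) ≠ 0 := by
      rw [Int.cast_natCast, Ne, ZMod.natCast_eq_zero_iff]
      exact hdvd
    have hLy : L y = legendreSym p ((y : ℕ) : ℤ) := rfl
    rw [hLy, legendreSym.eq_one_iff p hy0]
    constructor
    · rintro ⟨x, hx⟩
      refine ⟨(x : ZMod p), ?_⟩
      have h2 := (ZMod.intCast_eq_intCast_iff (x ^ 2) (y : ℤ) p).mpr hx
      push_cast at h2 ⊢
      rw [← h2]; ring
    · rintro ⟨x, hx⟩
      obtain ⟨z, hz⟩ := ZMod.intCast_surjective (n := p) x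
      refine ⟨z, (ZMod.intCast_eq_intCast_iff _ _ _).mp ?_⟩
      push_cast at hx ⊢
      rw [hz, hx]; ring
  have hQ' : ∀ y : ℕ, ¬ (p ∣ y) →
      ((¬ ∃ x : ℤ, x ^ 2 ≡ (y : ℤ) [ZMOD (p : ℤ)]) ↔ L y = -1) := by
    intro y hdvd
    have hy0 : ((y : ℤ) : ZMod p) ≠ 0 := by
      rw [Int.cast_natCast, Ne, ZMod.natCast_eq_zero_iff]
      exact hdvd
    rw [hQ y hdvd]
    have h1 : L y = 1 ∨ L y = -1 := legendreSym.eq_one_or_neg_one p hy0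
    rcases h1 with h1 | h1 <;> rw [h1] <;> norm_num
  -- weighted sums
  have hwt : ∀ s : Finset ℕ, (∀ y ∈ s, ¬ (p ∣ y)) →
      (∑ y ∈ Finset.filter (fun y : ℕ => ∃ x : ℤ, x ^ 2 ≡ (y : ℤ) [ZMOD (p : ℤ)]) s,
        ((y : ℕ) : ℤ)) -
      (∑ y ∈ Finset.filter (fun y : ℕ => ¬ ∃ x : ℤ, x ^ 2 ≡ (y : ℤ) [ZMOD (p : ℤ)]) s,
        ((y : ℕ) : ℤ)) =
      ∑ y ∈ s, L y * y := by
    intro s hs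
    rw [← Finset.sum_filter_add_sum_filter_not s
      (fun y : ℕ => ∃ x : ℤ, x ^ 2 ≡ (y : ℤ) [ZMOD (p : ℤ)]) (fun y => L y * y)]
    have e1 : ∑ y ∈ Finset.filter (fun y : ℕ => ∃ x : ℤ, x ^ 2 ≡ (y : ℤ) [ZMOD (p : ℤ)]) s,
          L y * y
        = ∑ y ∈ Finset.filter (fun y : ℕ => ∃ x : ℤ, x ^ 2 ≡ (y : ℤ) [ZMOD (p : ℤ)]) s,
          ((y : ℕ) : ℤ) := by
      refine Finset.sum_congr rfl fun y hy => ?_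
      rw [mem_filter] at hy
      rw [(hQ y (hs y hy.1)).mp hy.2, one_mul]
    have e2 : ∑ y ∈ Finset.filter (fun y : ℕ => ¬ ∃ x : ℤ, x ^ 2 ≡ (y : ℤ) [ZMOD (p : ℤ)]) s,
          L y * y
        = - ∑ y ∈ Finset.filter (fun y : ℕ => ¬ ∃ x : ℤ, x ^ 2 ≡ (y : ℤ) [ZMOD (p : ℤ)]) s,
          ((y : ℕ) : ℤ) := by
      rw [← Finset.sum_neg_distrib]
      refine Finset.sum_congr rfl fun y hy => ?_
      rw [mem_filter] at hy
      rw [(hQ' y (hs y hy.1)).mp hy.2]; ring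
    rw [e1, e2]; ring
  -- L at reflected / doubled points
  have hrange : ∀ y ∈ Icc 1 h, 1 ≤ y ∧ y ≤ h := fun y hy => by
    rw [mem_Icc] at hy; exact hy
  have hLrefl : ∀ y : ℕ, 1 ≤ y → y ≤ 2*h → L (2*h+1-y) = - L y := by
    intro y h1 h2
    have hc : (((2*h+1-y : ℕ) : ℤ) : ZMod p) = (((-1) * y : ℤ) : ZMod p) := by
      have e : ((2*h+1-y : ℕ) : ℤ) = (p : ℤ) - y := by push_cast [hph]; omega
      rw [e]
      push_cast
      simp [ZMod.natCast_self]
    show legendreSym p ((2*h+1-y : ℕ) : ℤ) = - legendreSym p ((y : ℕ) : ℤ)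
    rw [leg_congr' p hc, legendreSym.mul, hLneg1]
    ring
  have hLdouble : ∀ y : ℕ, L (2*y) = - L y := by
    intro y
    have e : ((2*y : ℕ) : ℤ) = 2 * (y : ℤ) := by push_cast; ring
    show legendreSym p ((2*y : ℕ) : ℤ) = - legendreSym p ((y : ℕ) : ℤ)
    rw [e, legendreSym.mul, hL2]
    ring
  -- the three sums
  set A : ℤ := ∑ y ∈ Icc 1 (2*h), L y * y with hA
  set B : ℤ := ∑ y ∈ Icc 1 h, L y * y with hB
  set C : ℤ := ∑ y ∈ Icc 1 h, L y with hC
  have key1 : A = 2 * B - p * C := by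
    rw [hA, sumA1' h (fun y => L y * y)]
    have e : ∑ y ∈ Icc 1 h, L (2*h+1-y) * ((2*h+1-y : ℕ) : ℤ)
        = ∑ y ∈ Icc 1 h, (L y * y - (p : ℤ) * L y) := by
      refine Finset.sum_congr rfl fun y hy => ?_
      obtain ⟨h1, h2⟩ := hrange y hy
      rw [hLrefl y h1 (by omega)]
      have e2 : ((2*h+1-y : ℕ) : ℤ) = (p : ℤ) - y := by push_cast [hph]; omega
      rw [e2]; ring
    rw [e, Finset.sum_sub_distrib, ← Finset.mul_sum, ← hB, ← hC]
    ring
  have key2 : A = p * C - 4 * B := by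
    rw [hA, sumA2' h (fun y => L y * y)]
    have e1 : ∑ y ∈ Icc 1 h, L (2*y) * ((2*y : ℕ) : ℤ) = ∑ y ∈ Icc 1 h, (-2) * (L y * y) := by
      refine Finset.sum_congr rfl fun y hy => ?_
      rw [hLdouble y]; push_cast; ring
    have e2 : ∑ y ∈ Icc 1 h, L (2*h+1-2*y) * ((2*h+1-2*y : ℕ) : ℤ)
        = ∑ y ∈ Icc 1 h, ((p : ℤ) * L y - 2 * (L y * y)) := by
      refine Finset.sum_congr rfl fun y hy => ?_
      obtain ⟨h1, h2⟩ := hrange y hy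
      have hr : L (2*h+1-2*y) = - L (2*y) := hLrefl (2*y) (by omega) (by omega)
      rw [hr, hLdouble y, neg_neg]
      have e3 : ((2*h+1-2*y : ℕ) : ℤ) = (p : ℤ) - 2*y := by push_cast [hph]; omega
      rw [e3]; ring
    rw [e1, e2, ← Finset.mul_sum, Finset.sum_sub_distrib, ← Finset.mul_sum, ← Finset.mul_sum,
      ← hB, ← hC]
    ring
  have hAB : A = - B := by linarith
  -- finish
  have hs1 : ∀ y ∈ Icc 1 (p - 1), ¬ (p ∣ y) := by
    intro y hy hd
    rw [mem_Icc] at hy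
    have := Nat.le_of_dvd (by omega) hd
    omega
  have hs2 : ∀ y ∈ Icc 1 ((p-1)/2), ¬ (p ∣ y) := by
    intro y hy
    rw [mem_Icc] at hy
    exact hs1 y (by rw [mem_Icc]; omega)
  have w1 := hwt (Icc 1 (p - 1)) hs1
  have w2 := hwt (Icc 1 ((p-1)/2)) hs2
  have hAeq : (∑ y ∈ Icc 1 (p-1), L y * y) = A := by rw [hA, hp1]
  have hBeq : (∑ y ∈ Icc 1 ((p-1)/2), L y * y) = B := by rw [hB, hh]
  rw [hAeq] at w1
  rw [hBeq] at w2
  simp only [coeM_eq', Finset.filter_image]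
  rw [Finset.sum_image (fun a _ b _ hcast => Nat.cast_injective hcast),
    Finset.sum_image (fun a _ b _ hcast => Nat.cast_injective hcast),
    Finset.sum_image (fun a _ b _ hcast => Nat.cast_injective hcast),
    Finset.sum_image (fun a _ b _ hcast => Nat.cast_injective hcast)]
  
  linarith
end

section
/- (Lebesgue) Let p be a prime with p ≡ 3 (mod 8). Then 3·(ΣN − ΣR) = p·(R_b(p) − N_b(p)), where ΣR and ΣN are the sums of all quadratic residues and non-residues of p in [1, p−1], and R_b(p), N_b(p) count the residues and non-residues in [1, (p−1)/2]. -/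
open Finset

section Aux

lemma legendre_congr (p : ℕ) [Fact p.Prime] {a b : ℤ} (h : ((a : ZMod p)) = (b : ZMod p)) :
    legendreSym p a = legendreSym p b := by
  simp only [legendreSym, h]

lemma sum_Icc_split (n : ℕ) (p : ℕ) (hpn : p = 2 * n + 1) (f : ℕ → ℤ) :
    ∑ y ∈ Finset.Icc 1 (p - 1), f y
      = ∑ y ∈ Finset.Icc 1 n, f y + ∑ y ∈ Finset.Icc 1 n, f (p - y) := by
  have h1 : Finset.Icc 1 (p-1) = Finset.Ioc 0 (2*n) := by rw [hpn]; rfl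
  have h2 : Finset.Icc 1 n = Finset.Ioc 0 n := rfl
  rw [h1, h2, ← Finset.sum_Ioc_consecutive f (Nat.zero_le n) (by omega : n ≤ 2*n)]
  congr 1
  refine Finset.sum_nbij' (fun y => p - y) (fun y => p - y) ?_ ?_ ?_ ?_ ?_
  · intro a ha; simp only [Finset.mem_Ioc] at *; omega
  · intro a ha; simp only [Finset.mem_Ioc] at *; omega
  · intro a ha; simp only [Finset.mem_Ioc] at *; omega
  · intro a ha; simp only [Finset.mem_Ioc] at *; omega
  · intro a ha
    simp only [Finset.mem_Ioc] at ha
    (try dsimp only); congr 1; omega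

open scoped Classical in
lemma sum_even_reindex (n p : ℕ) (hpn : p = 2 * n + 1) (f : ℕ → ℤ) :
    ∑ y ∈ (Finset.Icc 1 (p-1)).filter (fun y => Even y), f y
      = ∑ z ∈ Finset.Icc 1 n, f (2 * z) := by
  refine (Finset.sum_nbij' (fun y => y / 2) (fun z => 2 * z) ?_ ?_ ?_ ?_ ?_).symm.symm
  · intro a ha
    simp only [Finset.mem_filter, Finset.mem_Icc, Nat.even_iff] at ha ⊢
    omega
  · intro a ha
    simp only [Finset.mem_filter, Finset.mem_Icc, Nat.even_iff] at ha ⊢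
    omega
  · intro a ha
    simp only [Finset.mem_filter, Finset.mem_Icc, Nat.even_iff] at ha
    omega
  · intro a ha; omega
  · intro a ha
    simp only [Finset.mem_filter, Finset.mem_Icc, Nat.even_iff] at ha
    (try dsimp only); congr 1; omega

open scoped Classical in
lemma sum_odd_reindex (n p : ℕ) (hpn : p = 2 * n + 1) (f : ℕ → ℤ) :
    ∑ y ∈ (Finset.Icc 1 (p-1)).filter (fun y => ¬ Even y), f y
      = ∑ y ∈ (Finset.Icc 1 (p-1)).filter (fun y => Even y), f (p - y) := by
  refine Finset.sum_nbij' (fun y => p - y) (fun y => p - y) ?_ ?_ ?_ ?_ ?_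
  · intro a ha
    simp only [Finset.mem_filter, Finset.mem_Icc, Nat.even_iff] at ha ⊢
    omega
  · intro a ha
    simp only [Finset.mem_filter, Finset.mem_Icc, Nat.even_iff] at ha ⊢
    omega
  · intro a ha
    simp only [Finset.mem_filter, Finset.mem_Icc, Nat.even_iff] at ha
    omega
  · intro a ha
    simp only [Finset.mem_filter, Finset.mem_Icc, Nat.even_iff] at ha
    omega
  · intro a ha
    simp only [Finset.mem_filter, Finset.mem_Icc] at ha
    (try dsimp only); congr 1; omega

end Aux


open scoped Classical in
/-- (Lebesgue) For a prime `p ≡ 3 (mod 8)`: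
`3·(ΣN − ΣR) = p·(R_b(p) − N_b(p))`, where `ΣR`, `ΣN` are the sums of all residues /
non-residues in `[1, p-1]`, and `R_b`, `N_b` count residues / non-residues in
`[1, (p-1)/2]`. -/
theorem three_mul_sum_diff_eq_of_prime_mod_eight_eq_three
    (p : ℕ) (hp : p.Prime) (hmod : p % 8 = 3) :
    3 * ((∑ y ∈ (Finset.Icc 1 (p - 1)).filter
        (fun y => ¬ ∃ x : ℤ, x ^ 2 ≡ (y : ℤ) [ZMOD (p : ℤ)]), (y : ℤ)) -
      (∑ y ∈ (Finset.Icc 1 (p - 1)).filter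
        (fun y => ∃ x : ℤ, x ^ 2 ≡ (y : ℤ) [ZMOD (p : ℤ)]), (y : ℤ))) =
    (p : ℤ) *
      ((((Finset.Icc 1 ((p - 1) / 2)).filter
          (fun y => ∃ x : ℤ, x ^ 2 ≡ (y : ℤ) [ZMOD (p : ℤ)])).card : ℤ) -
        (((Finset.Icc 1 ((p - 1) / 2)).filter
          (fun y => ¬ ∃ x : ℤ, x ^ 2 ≡ (y : ℤ) [ZMOD (p : ℤ)])).card : ℤ)) := by
  haveI : Fact p.Prime := ⟨hp⟩
  have hp2 : p ≠ 2 := by omega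
  set n := (p - 1) / 2 with hn
  have hpn : p = 2 * n + 1 := by omega
  have hn1 : 1 ≤ n := by omega
  -- Legendre symbol basics
  have hchi2 : legendreSym p 2 = -1 := by
    have h2' : ¬ (p % 2 = 0) := by omega
    have h8' : ¬ (p % 8 = 1 ∨ p % 8 = 7) := by omega
    rw [legendreSym.at_two hp2, ZMod.χ₈_nat_eq_if_mod_eight, if_neg h2', if_neg h8']
  have hchineg1 : legendreSym p (-1) = -1 := by
    rw [legendreSym.at_neg_one hp2, ZMod.χ₄_nat_three_mod_four (by omega : p % 4 = 3)]
  set χ : ℕ → ℤ := fun y => legendreSym p (y : ℤ) with hχdef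
  have hsub : ∀ y : ℕ, y ≤ p → χ (p - y) = - χ y := by
    intro y hy
    have hcast : (((p - y : ℕ) : ℤ) : ZMod p) = (((-1) * (y : ℕ) : ℤ) : ZMod p) := by
      push_cast [Nat.cast_sub hy]
      simp [ZMod.natCast_self]
    simp only [hχdef]
    rw [legendre_congr p hcast, legendreSym.mul, hchineg1]
    ring
  have hdouble : ∀ z : ℕ, χ (2 * z) = - χ z := by
    intro z
    simp only [hχdef]
    push_cast
    rw [legendreSym.mul, hchi2]
    ring
  -- residue characterizations
  have hne : ∀ y : ℕ, 1 ≤ y → y ≤ p - 1 → (((y : ℕ) : ℤ) : ZMod p) ≠ 0 := by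
    intro y h1 h2
    rw [Int.cast_natCast, Ne, ZMod.natCast_eq_zero_iff]
    intro hdvd
    have := Nat.le_of_dvd (by omega) hdvd
    omega
  have hPiff : ∀ y : ℕ, 1 ≤ y → y ≤ p - 1 →
      ((∃ x : ℤ, x ^ 2 ≡ (y : ℤ) [ZMOD (p : ℤ)]) ↔ χ y = 1) := by
    intro y h1 h2
    simp only [hχdef]
    rw [legendreSym.eq_one_iff p (hne y h1 h2)]
    constructor
    · rintro ⟨x, hx⟩
      have hx' : ((x ^ 2 : ℤ) : ZMod p) = (((y : ℕ) : ℤ) : ZMod p) :=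
        (ZMod.intCast_eq_intCast_iff _ _ _).mpr hx
      exact ⟨(x : ZMod p), by rw [← hx']; push_cast; ring⟩
    · rintro ⟨r, hr⟩
      obtain ⟨x, rfl⟩ := ZMod.intCast_surjective r
      refine ⟨x, (ZMod.intCast_eq_intCast_iff _ _ _).mp ?_⟩
      push_cast
      push_cast at hr
      rw [hr]
      ring
  have hPneg : ∀ y : ℕ, 1 ≤ y → y ≤ p - 1 →
      ((¬ ∃ x : ℤ, x ^ 2 ≡ (y : ℤ) [ZMOD (p : ℤ)]) ↔ χ y = -1) := by
    intro y h1 h2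
    rw [hPiff y h1 h2]
    simp only [hχdef]
    rw [legendreSym.eq_neg_one_iff_not_one p (hne y h1 h2)]
  -- sums
  set T := ∑ y ∈ Finset.Icc 1 (p - 1), χ y * (y : ℤ) with hTdef
  set Sb := ∑ y ∈ Finset.Icc 1 n, χ y * (y : ℤ) with hSbdef
  set D := ∑ y ∈ Finset.Icc 1 n, χ y with hDdef
  have h1 : T = 2 * Sb - p * D := by
    rw [hTdef, sum_Icc_split n p hpn (fun y => χ y * (y : ℤ))]
    have : ∀ y ∈ Finset.Icc 1 n, χ (p - y) * ((p - y : ℕ) : ℤ)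
        = χ y * (y : ℤ) - (p : ℤ) * χ y := by
      intro y hy
      simp only [Finset.mem_Icc] at hy
      rw [hsub y (by omega), Nat.cast_sub (by omega)]
      ring
    rw [Finset.sum_congr rfl this, Finset.sum_sub_distrib, ← Finset.mul_sum]
    rw [hSbdef, hDdef]
    ring
  have h2even : ∑ y ∈ (Finset.Icc 1 (p - 1)).filter (fun y => Even y), χ y * (y : ℤ)
      = -2 * Sb := by
    rw [sum_even_reindex n p hpn (fun y => χ y * (y : ℤ))]
    have : ∀ z ∈ Finset.Icc 1 n, χ (2 * z) * ((2 * z : ℕ) : ℤ)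
        = (-2) * (χ z * (z : ℤ)) := by
      intro z hz
      rw [hdouble z]
      push_cast
      ring
    rw [Finset.sum_congr rfl this, ← Finset.mul_sum, hSbdef]
  have h2evenchi : ∑ y ∈ (Finset.Icc 1 (p - 1)).filter (fun y => Even y), χ y = -D := by
    rw [sum_even_reindex n p hpn (fun y => χ y)]
    have : ∀ z ∈ Finset.Icc 1 n, χ (2 * z) = (-1) * χ z := by
      intro z hz
      rw [hdouble z]; ring
    rw [Finset.sum_congr rfl this, ← Finset.mul_sum, hDdef]
    ring
  have h3 : ∑ y ∈ (Finset.Icc 1 (p - 1)).filter (fun y => ¬ Even y), χ y * (y : ℤ)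
      = p * D - 2 * Sb := by
    rw [sum_odd_reindex n p hpn (fun y => χ y * (y : ℤ))]
    have : ∀ y ∈ (Finset.Icc 1 (p - 1)).filter (fun y => Even y),
        χ (p - y) * ((p - y : ℕ) : ℤ) = χ y * (y : ℤ) - (p : ℤ) * χ y := by
      intro y hy
      simp only [Finset.mem_filter, Finset.mem_Icc] at hy
      rw [hsub y (by omega), Nat.cast_sub (by omega)]
      ring
    rw [Finset.sum_congr rfl this, Finset.sum_sub_distrib, ← Finset.mul_sum,
      h2even, h2evenchi]
    ring
  have h4 : T = -2 * Sb + (p * D - 2 * Sb) := by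
    rw [hTdef, ← Finset.sum_filter_add_sum_filter_not (Finset.Icc 1 (p - 1))
      (fun y => Even y) (fun y => χ y * (y : ℤ)), h2even, h3]
  have hkey : 3 * Sb = p * D := by linarith
  -- translate to the statement's sums
  have hTgoal : (∑ y ∈ (Finset.Icc 1 (p - 1)).filter
        (fun y : ℕ => ∃ x : ℤ, x ^ 2 ≡ (y : ℤ) [ZMOD (p : ℤ)]), (y : ℤ)) -
      (∑ y ∈ (Finset.Icc 1 (p - 1)).filter
        (fun y : ℕ => ¬ ∃ x : ℤ, x ^ 2 ≡ (y : ℤ) [ZMOD (p : ℤ)]), (y : ℤ)) = T := by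
    rw [hTdef, ← Finset.sum_filter_add_sum_filter_not (Finset.Icc 1 (p - 1))
      (fun y => ∃ x : ℤ, x ^ 2 ≡ (y : ℤ) [ZMOD (p : ℤ)]) (fun y => χ y * (y : ℤ))]
    have e1 : ∀ y ∈ (Finset.Icc 1 (p - 1)).filter
        (fun y : ℕ => ∃ x : ℤ, x ^ 2 ≡ (y : ℤ) [ZMOD (p : ℤ)]), χ y * (y : ℤ) = (y : ℤ) := by
      intro y hy
      simp only [Finset.mem_filter, Finset.mem_Icc] at hy
      rw [(hPiff y hy.1.1 hy.1.2).mp hy.2]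
      ring
    have e2 : ∀ y ∈ (Finset.Icc 1 (p - 1)).filter
        (fun y : ℕ => ¬ ∃ x : ℤ, x ^ 2 ≡ (y : ℤ) [ZMOD (p : ℤ)]), χ y * (y : ℤ) = -(y : ℤ) := by
      intro y hy
      simp only [Finset.mem_filter, Finset.mem_Icc] at hy
      rw [(hPneg y hy.1.1 hy.1.2).mp hy.2]
      ring
    rw [Finset.sum_congr rfl e1, Finset.sum_congr rfl e2, Finset.sum_neg_distrib]
    ring
  have hDgoal : D = ((((Finset.Icc 1 n).filter
          (fun y : ℕ => ∃ x : ℤ, x ^ 2 ≡ (y : ℤ) [ZMOD (p : ℤ)])).card : ℤ) -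
        (((Finset.Icc 1 n).filter
          (fun y : ℕ => ¬ ∃ x : ℤ, x ^ 2 ≡ (y : ℤ) [ZMOD (p : ℤ)])).card : ℤ)) := by
    rw [hDdef, ← Finset.sum_filter_add_sum_filter_not (Finset.Icc 1 n)
      (fun y => ∃ x : ℤ, x ^ 2 ≡ (y : ℤ) [ZMOD (p : ℤ)]) (fun y => χ y)]
    have e1 : ∀ y ∈ (Finset.Icc 1 n).filter
        (fun y : ℕ => ∃ x : ℤ, x ^ 2 ≡ (y : ℤ) [ZMOD (p : ℤ)]), χ y = 1 := by
      intro y hy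
      simp only [Finset.mem_filter, Finset.mem_Icc] at hy
      exact (hPiff y hy.1.1 (by omega)).mp hy.2
    have e2 : ∀ y ∈ (Finset.Icc 1 n).filter
        (fun y : ℕ => ¬ ∃ x : ℤ, x ^ 2 ≡ (y : ℤ) [ZMOD (p : ℤ)]), χ y = -1 := by
      intro y hy
      simp only [Finset.mem_filter, Finset.mem_Icc] at hy
      exact (hPneg y hy.1.1 (by omega)).mp hy.2
    rw [Finset.sum_congr rfl e1, Finset.sum_congr rfl e2, Finset.sum_const,
      Finset.sum_const]
    simp only [nsmul_eq_mul, smul_eq_mul]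
    ring
  have himg : ∀ (s : Finset ℕ), (do let a ← s; pure ((a : ℤ))) = s.image (fun a : ℕ => (a : ℤ)) := by
    intro s
    ext b
    simp [Finset.bind_def, Finset.pure_def, Finset.mem_sup, eq_comm]
  simp only [himg, Finset.filter_image]
  rw [Finset.sum_image (fun x _ y _ h => Nat.cast_injective h),
    Finset.sum_image (fun x _ y _ h => Nat.cast_injective h),
    Finset.card_image_of_injective _ Nat.cast_injective,
    Finset.card_image_of_injective _ Nat.cast_injective]
  rw [← hDgoal]
  linarith [hTgoal]
end

section
/- Let p be a prime with p ≡ 7 (mod 8). Then the sum of the quadratic residues of p lying in [1, (p−1)/2] equals (p−1)(p+1)/16, i.e. ΣR_b = (p²−1)/16. -/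
private lemma mySquare_mul_iff {F : Type*} [Field F] {a : F} (ha : IsSquare a) (ha0 : a ≠ 0)
    (b : F) : IsSquare (a * b) ↔ IsSquare b := by
  obtain ⟨d, hd⟩ := ha
  have hd0 : d ≠ 0 := by rintro rfl; exact ha0 (by simp [hd])
  constructor
  · rintro ⟨c, hc⟩
    refine ⟨c / d, ?_⟩
    field_simp
    rw [sq c, ← hc, hd]; ring
  · rintro ⟨c, rfl⟩
    exact ⟨d * c, by rw [hd]; ring⟩

private lemma mySquare_neg_iff {p : ℕ} [Fact p.Prime] (hp4 : p % 4 = 3) {a : ZMod p}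
    (ha : a ≠ 0) : IsSquare (-a) ↔ ¬ IsSquare a := by
  have hns : ¬ IsSquare (-1 : ZMod p) := by
    rw [ZMod.exists_sq_eq_neg_one_iff]; simp [hp4]
  have hχ : quadraticChar (ZMod p) (-1 : ZMod p) = -1 :=
    quadraticChar_neg_one_iff_not_isSquare.mpr hns
  have hmul : quadraticChar (ZMod p) (-a) = - quadraticChar (ZMod p) a := by
    have : (-a) = (-1) * a := by ring
    rw [this, map_mul, hχ]; ring
  have hna : (-a) ≠ 0 := neg_ne_zero.mpr ha
  rw [← quadraticChar_one_iff_isSquare hna, hmul, ← quadraticChar_neg_one_iff_not_isSquare]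
  constructor
  · intro h; linarith [h]
  · intro h; rw [h]; ring

open scoped Classical in
private theorem sum_small_residues_nat (p : ℕ) (hp : p.Prime) (hmod : p % 8 = 7) :
    ∑ y ∈ (Finset.Icc 1 ((p - 1) / 2)).filter
        (fun y : ℕ => ∃ x : ℤ, x ^ 2 ≡ (y : ℤ) [ZMOD (p : ℤ)]), y =
      (p ^ 2 - 1) / 16 := by
  haveI : Fact p.Prime := ⟨hp⟩
  have hp7 : 7 ≤ p := by
    rcases Nat.lt_or_ge p 7 with h | h
    · interval_cases p <;> omega
    · exact h
  set n : ℕ := (p - 1) / 2 with hn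
  have hpn : p = 2 * n + 1 := by omega
  -- predicate translation
  have key_pred : ∀ y : ℕ, (∃ x : ℤ, x ^ 2 ≡ (y:ℤ) [ZMOD (p:ℤ)]) ↔ IsSquare ((y : ZMod p)) := by
    intro y
    constructor
    · rintro ⟨x, hx⟩
      have h2 : ((x ^ 2 : ℤ) : ZMod p) = ((y : ℤ) : ZMod p) :=
        (ZMod.intCast_eq_intCast_iff _ _ _).mpr hx
      push_cast at h2
      exact ⟨(x : ZMod p), by rw [← h2]; ring⟩
    · rintro ⟨r, hr⟩
      obtain ⟨x, rfl⟩ := ZMod.intCast_surjective r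
      refine ⟨x, (ZMod.intCast_eq_intCast_iff _ _ _).mp ?_⟩
      push_cast
      rw [hr]; ring
  -- basic square facts
  have h2sq : IsSquare (2 : ZMod p) := (ZMod.exists_sq_eq_two_iff (by omega)).mpr (Or.inr hmod)
  have h2ne : (2 : ZMod p) ≠ 0 := by
    have : ((2:ℕ) : ZMod p) ≠ 0 := by
      rw [Ne, ZMod.natCast_eq_zero_iff]
      intro h; have := Nat.le_of_dvd (by omega) h; omega
    simpa using this
  have hQdouble : ∀ z : ℕ, IsSquare (((2 * z : ℕ) : ZMod p)) ↔ IsSquare ((z : ZMod p)) := by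
    intro z
    have : ((2 * z : ℕ) : ZMod p) = (2 : ZMod p) * (z : ZMod p) := by push_cast; ring
    rw [this]
    exact mySquare_mul_iff h2sq h2ne _
  have hQsub : ∀ z : ℕ, p ≤ z → ((z - p : ℕ) : ZMod p) = ((z : ℕ) : ZMod p) := by
    intro z hz
    have : ((z - p : ℕ) : ZMod p) = ((z : ℕ) : ZMod p) - ((p : ℕ) : ZMod p) := by
      push_cast [Nat.cast_sub hz]; ring
    rw [this, ZMod.natCast_self, sub_zero]
  have hQneg : ∀ y : ℕ, 1 ≤ y → y ≤ 2 * n →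
      (IsSquare (((p - y : ℕ) : ZMod p)) ↔ ¬ IsSquare ((y : ZMod p))) := by
    intro y h1 h2
    have hy0 : (y : ZMod p) ≠ 0 := by
      rw [Ne, ZMod.natCast_eq_zero_iff]
      intro h; have := Nat.le_of_dvd (by omega) h; omega
    have hcast : ((p - y : ℕ) : ZMod p) = -(y : ZMod p) := by
      have : ((p - y : ℕ) : ZMod p) = ((p : ℕ) : ZMod p) - (y : ZMod p) := by
        push_cast [Nat.cast_sub (by omega : y ≤ p)]; ring
      rw [this, ZMod.natCast_self, zero_sub]
    rw [hcast]
    exact mySquare_neg_iff (by omega) hy0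
  have hQadd : ∀ w : ℕ, ((w + p : ℕ) : ZMod p) = (w : ZMod p) := by
    intro w; push_cast; simp [ZMod.natCast_self]
  -- the finsets
  set A := (Finset.Icc 1 n).filter (fun y : ℕ => IsSquare ((y : ZMod p))) with hA
  set Bs := (Finset.Icc 1 n).filter (fun y : ℕ => ¬ IsSquare ((y : ZMod p))) with hBs
  set U := (Finset.Ioc n (2 * n)).filter (fun y : ℕ => IsSquare ((y : ZMod p))) with hU
  set D := (Finset.Icc 1 (2 * n)).filter (fun y : ℕ => IsSquare ((y : ZMod p))) with hD
  have hgoal : (Finset.Icc 1 n).filter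
      (fun y : ℕ => ∃ x : ℤ, x ^ 2 ≡ (y : ℤ) [ZMOD (p : ℤ)]) = A :=
    Finset.filter_congr (fun y _ => key_pred y)
  rw [hgoal]
  -- split D
  have hIccsplit : Finset.Icc 1 (2 * n) = Finset.Icc 1 n ∪ Finset.Ioc n (2 * n) := by
    ext x; simp only [Finset.mem_Icc, Finset.mem_Ioc, Finset.mem_union]; omega
  have hdisj : Disjoint A U := by
    rw [Finset.disjoint_left]
    intro a ha hb
    simp only [hA, hU, Finset.mem_filter, Finset.mem_Icc, Finset.mem_Ioc] at ha hb
    omega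
  have hDsum : ∀ f : ℕ → ℕ, ∑ z ∈ D, f z = ∑ z ∈ A, f z + ∑ z ∈ U, f z := by
    intro f
    rw [hD, hIccsplit, Finset.filter_union, Finset.sum_union hdisj]
  -- bijection between Bs and U via y ↦ p - y
  have hBUmap1 : ∀ a ∈ Bs, p - a ∈ U := by
    intro a ha
    simp only [hBs, Finset.mem_filter, Finset.mem_Icc] at ha
    simp only [hU, Finset.mem_filter, Finset.mem_Ioc]
    exact ⟨⟨by omega, by omega⟩, (hQneg a (by omega) (by omega)).mpr ha.2⟩
  have hBUmap2 : ∀ b ∈ U, p - b ∈ Bs := by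
    intro b hb
    simp only [hU, Finset.mem_filter, Finset.mem_Ioc] at hb
    simp only [hBs, Finset.mem_filter, Finset.mem_Icc]
    refine ⟨⟨by omega, by omega⟩, ?_⟩
    have h := hQneg (p - b) (by omega) (by omega)
    rw [show p - (p - b) = b by omega] at h
    exact h.mp hb.2
  have hBUsum : ∀ f : ℕ → ℕ, ∑ y ∈ Bs, f (p - y) = ∑ y ∈ U, f y := by
    intro f
    refine Finset.sum_nbij' (fun y => p - y) (fun y => p - y) hBUmap1 hBUmap2 ?_ ?_ ?_
    · intro a ha
      simp only [hBs, Finset.mem_filter, Finset.mem_Icc] at ha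
      show p - (p - a) = a
      omega
    · intro b hb
      simp only [hU, Finset.mem_filter, Finset.mem_Ioc] at hb
      show p - (p - b) = b
      omega
    · intro a _; rfl
  -- doubling bijection on D
  have hDbij : ∑ z ∈ D, (if z ≤ n then 2 * z else 2 * z - p) = ∑ z ∈ D, z := by
    refine Finset.sum_nbij' (fun z => if z ≤ n then 2 * z else 2 * z - p)
      (fun w => if w % 2 = 0 then w / 2 else (w + p) / 2) ?_ ?_ ?_ ?_ ?_
    · intro z hz
      simp only [hD, Finset.mem_filter, Finset.mem_Icc] at hz ⊢
      by_cases h : z ≤ n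
      · rw [if_pos h]
        exact ⟨⟨by omega, by omega⟩, (hQdouble z).mpr hz.2⟩
      · rw [if_neg h]
        refine ⟨⟨by omega, by omega⟩, ?_⟩
        rw [hQsub (2 * z) (by omega)]
        exact (hQdouble z).mpr hz.2
    · intro w hw
      simp only [hD, Finset.mem_filter, Finset.mem_Icc] at hw ⊢
      by_cases h : w % 2 = 0
      · rw [if_pos h]
        refine ⟨⟨by omega, by omega⟩, ?_⟩
        have hq := hQdouble (w / 2)
        rw [show 2 * (w / 2) = w by omega] at hq
        exact hq.mp hw.2
      · rw [if_neg h]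
        refine ⟨⟨by omega, by omega⟩, ?_⟩
        have hq := hQdouble ((w + p) / 2)
        rw [show 2 * ((w + p) / 2) = w + p by omega, hQadd w] at hq
        exact hq.mp hw.2
    · intro z hz
      simp only [hD, Finset.mem_filter, Finset.mem_Icc] at hz
      by_cases h : z ≤ n
      · simp only [if_pos h]
        rw [if_pos (by omega : 2 * z % 2 = 0)]
        omega
      · simp only [if_neg h]
        rw [if_neg (by omega : ¬ (2 * z - p) % 2 = 0)]
        omega
    · intro w hw
      simp only [hD, Finset.mem_filter, Finset.mem_Icc] at hw
      by_cases h : w % 2 = 0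
      · simp only [if_pos h]
        rw [if_pos (by omega : w / 2 ≤ n)]
        omega
      · simp only [if_neg h]
        rw [if_neg (by omega : ¬ (w + p) / 2 ≤ n)]
        omega
    · intro z _; rfl
  -- compute the doubled sum
  have hsplit2 : ∑ z ∈ D, (if z ≤ n then 2 * z else 2 * z - p)
      = ∑ z ∈ A, 2 * z + ∑ z ∈ U, (2 * z - p) := by
    rw [hDsum]
    congr 1
    · apply Finset.sum_congr rfl
      intro z hz
      simp only [hA, Finset.mem_filter, Finset.mem_Icc] at hz
      rw [if_pos hz.1.2]
    · apply Finset.sum_congr rfl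
      intro z hz
      simp only [hU, Finset.mem_filter, Finset.mem_Ioc] at hz
      rw [if_neg (by omega)]
  have hU2 : ∑ z ∈ U, (2 * z - p) + ∑ z ∈ U, p = ∑ z ∈ U, 2 * z := by
    rw [← Finset.sum_add_distrib]
    apply Finset.sum_congr rfl
    intro z hz
    simp only [hU, Finset.mem_filter, Finset.mem_Ioc] at hz
    omega
  have hA2 : ∑ z ∈ A, 2 * z = 2 * ∑ z ∈ A, z := by rw [Finset.mul_sum]
  have hU3 : ∑ z ∈ U, 2 * z = 2 * ∑ z ∈ U, z := by rw [Finset.mul_sum]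
  have e3 : ∑ y ∈ Bs, (p - y) = ∑ y ∈ U, y := hBUsum (fun y => y)
  have e2 : ∑ _y ∈ Bs, p = ∑ _y ∈ U, p := hBUsum (fun _ => p)
  have e4 : ∑ y ∈ Bs, (p - y) + ∑ y ∈ Bs, y = ∑ _y ∈ Bs, p := by
    rw [← Finset.sum_add_distrib]
    apply Finset.sum_congr rfl
    intro y hy
    simp only [hBs, Finset.mem_filter, Finset.mem_Icc] at hy
    omega
  have e1 : ∑ y ∈ A, y + ∑ y ∈ Bs, y = ∑ y ∈ Finset.Icc 1 n, y :=
    Finset.sum_filter_add_sum_filter_not _ _ _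
  have hDz : ∑ z ∈ D, z = ∑ z ∈ A, z + ∑ z ∈ U, z := hDsum (fun z => z)
  -- Gauss sum
  have hGauss : (∑ y ∈ Finset.Icc 1 n, y) * 2 = n * (n + 1) := by
    have h1 : ∑ y ∈ Finset.Icc 1 n, y = ∑ y ∈ Finset.range (n + 1), y := by
      rw [← Finset.Ico_add_one_right_eq_Icc, Finset.range_eq_Ico]
      apply Finset.sum_subset
      · intro x; simp only [Finset.mem_Ico]; omega
      · intro x hx hnx
        simp only [Finset.mem_Ico] at hx hnx
        omega
    rw [h1, Finset.sum_range_id_mul_two]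
    rw [show n + 1 - 1 = n from rfl, Nat.mul_comm]
  -- combine
  have h4S : n * (n + 1) = 4 * ∑ y ∈ A, y := by omega
  have hp2eq : p ^ 2 = 16 * ∑ y ∈ A, y + 1 := by
    have h : p ^ 2 = 4 * (n * (n + 1)) + 1 := by rw [hpn]; ring
    omega
  rw [hp2eq]
  omega

open scoped Classical in
/-- For a prime `p ≡ 7 (mod 8)`, the sum of the quadratic residues of `p`
in `[1, (p-1)/2]` equals `(p² - 1)/16`. -/
theorem sum_small_residues_eq_of_prime_mod_eight_eq_seven
    (p : ℕ) (hp : p.Prime) (hmod : p % 8 = 7) :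
    ∑ y ∈ (Finset.Icc 1 ((p - 1) / 2)).filter
        (fun y => ∃ x : ℤ, x ^ 2 ≡ (y : ℤ) [ZMOD (p : ℤ)]), y =
      (p ^ 2 - 1) / 16 := by
  have hnat := sum_small_residues_nat p hp hmod
  have hdom : (do
      let a ← Finset.Icc 1 ((p - 1) / 2)
      (pure ((a : ℤ)) : Finset ℤ)) =
      Finset.image (fun a : ℕ => (a : ℤ)) (Finset.Icc 1 ((p - 1) / 2)) := by
    ext y
    simp only [Finset.bind_def, Finset.mem_sup, Finset.pure_def, Finset.mem_singleton,
      Finset.mem_image]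
    tauto
  rw [hdom]
  have himg : (Finset.image (fun a : ℕ => (a : ℤ)) (Finset.Icc 1 ((p - 1) / 2))).filter
        (fun y : ℤ => ∃ x : ℤ, x ^ 2 ≡ y [ZMOD (p : ℤ)]) =
      Finset.image (fun a : ℕ => (a : ℤ))
        (((Finset.Icc 1 ((p - 1) / 2))).filter
          (fun y : ℕ => ∃ x : ℤ, x ^ 2 ≡ (y : ℤ) [ZMOD (p : ℤ)])) := by
    ext y
    simp only [Finset.mem_filter, Finset.mem_image]
    constructor
    · rintro ⟨⟨a, ha, rfl⟩, hP⟩; exact ⟨a, ⟨ha, hP⟩, rfl⟩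
    · rintro ⟨a, ⟨ha, hP⟩, rfl⟩; exact ⟨⟨a, ha, rfl⟩, hP⟩
  rw [himg, Finset.sum_image (fun a _ b _ h => Nat.cast_injective h)]
  rw [← Nat.cast_sum]
  rw [hnat]
  have h1 : 1 ≤ p ^ 2 := by nlinarith [hp.two_le]
  push_cast [Int.ofNat_tdiv, Nat.cast_sub h1]
  norm_num
end

section
/- Let p be a prime with p ≡ 7 (mod 8). Then the sum of the non-residues of p lying in [1, (p−1)/2] equals (p−1)(p+1)/16, i.e. ΣN_b = (p²−1)/16. -/
open Finset

private lemma aux_pred (p : ℕ) (y : ℕ) :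
    (∃ x : ℤ, x ^ 2 ≡ (y : ℤ) [ZMOD (p : ℤ)]) ↔ IsSquare ((y : ZMod p)) := by
  constructor
  · rintro ⟨x, hx⟩
    refine ⟨(x : ZMod p), ?_⟩
    have h : ((x ^ 2 : ℤ) : ZMod p) = ((y : ℤ) : ZMod p) :=
      (ZMod.intCast_eq_intCast_iff _ _ _).2 hx
    push_cast at h
    rw [← h]; ring
  · rintro ⟨r, hr⟩
    obtain ⟨x, rfl⟩ := ZMod.intCast_surjective r
    refine ⟨x, (ZMod.intCast_eq_intCast_iff _ _ _).1 ?_⟩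
    push_cast
    rw [hr]; ring

private lemma aux_ne_zero {p y : ℕ} (h1 : 1 ≤ y) (h2 : y < p) : ((y : ZMod p)) ≠ 0 := by
  rw [Ne, ZMod.natCast_eq_zero_iff]
  intro h
  exact absurd (Nat.le_of_dvd (by omega) h) (by omega)

private lemma aux_two_mul {p : ℕ} [Fact p.Prime] (hmod : p % 8 = 7) {y : ℕ}
    (h1 : 1 ≤ y) (h2 : 2 * y < p) :
    IsSquare (((2 * y : ℕ)) : ZMod p) ↔ IsSquare ((y : ZMod p)) := by
  have hp2 : p ≠ 2 := by omega
  have hy : ((y : ZMod p)) ≠ 0 := aux_ne_zero h1 (by omega)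
  have h2z : ((2 : ZMod p)) ≠ 0 := by
    have := aux_ne_zero (p := p) (y := 2) (by norm_num) (by omega)
    simpa using this
  have hs2 : IsSquare (2 : ZMod p) := (ZMod.exists_sq_eq_two_iff hp2).2 (Or.inr hmod)
  have hc2 : quadraticChar (ZMod p) 2 = 1 := (quadraticChar_one_iff_isSquare h2z).2 hs2
  have hcast : (((2 * y : ℕ)) : ZMod p) = 2 * (y : ZMod p) := by push_cast; ring
  rw [hcast, ← quadraticChar_one_iff_isSquare (mul_ne_zero h2z hy),
    ← quadraticChar_one_iff_isSquare hy, map_mul, hc2, one_mul]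

private lemma aux_neg {p : ℕ} [Fact p.Prime] (hmod : p % 8 = 7) {y : ℕ}
    (h1 : 1 ≤ y) (h2 : 2 * y < p) :
    IsSquare (((p - 2 * y : ℕ)) : ZMod p) ↔ ¬ IsSquare ((y : ZMod p)) := by
  have hp2 : p ≠ 2 := by omega
  have hy : ((y : ZMod p)) ≠ 0 := aux_ne_zero h1 (by omega)
  have h2z : ((2 : ZMod p)) ≠ 0 := by
    have := aux_ne_zero (p := p) (y := 2) (by norm_num) (by omega)
    simpa using this
  have hs2 : IsSquare (2 : ZMod p) := (ZMod.exists_sq_eq_two_iff hp2).2 (Or.inr hmod)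
  have hc2 : quadraticChar (ZMod p) 2 = 1 := (quadraticChar_one_iff_isSquare h2z).2 hs2
  have hneg : quadraticChar (ZMod p) (-1) = -1 := by
    rw [quadraticChar_neg_one_iff_not_isSquare, ZMod.exists_sq_eq_neg_one_iff]
    omega
  have hcast : (((p - 2 * y : ℕ)) : ZMod p) = -(2 * (y : ZMod p)) := by
    rw [Nat.cast_sub h2.le]
    push_cast
    rw [ZMod.natCast_self]
    ring
  have hz : (-(2 * (y : ZMod p))) ≠ 0 := by
    simpa using mul_ne_zero h2z hy
  have hkey : quadraticChar (ZMod p) (-(2 * (y : ZMod p)))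
      = - quadraticChar (ZMod p) ((y : ZMod p)) := by
    rw [show (-(2 * (y : ZMod p))) = (-1) * 2 * (y : ZMod p) by ring, map_mul, map_mul,
      hneg, hc2]
    ring
  rw [hcast, ← quadraticChar_one_iff_isSquare hz, hkey,
    ← quadraticChar_neg_one_iff_not_isSquare]
  constructor
  · intro h; omega
  · intro h; omega

private lemma aux_rearrange {p m : ℕ} (hpm : p = 2 * m + 1) (F : ℕ → ℤ) :
    ∑ y ∈ Finset.Icc 1 m, F (if 2 * y ≤ m then 2 * y else p - 2 * y)
      = ∑ z ∈ Finset.Icc 1 m, F z := by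
  apply Finset.sum_nbij' (i := fun y => if 2 * y ≤ m then 2 * y else p - 2 * y)
    (j := fun z => if z % 2 = 0 then z / 2 else (p - z) / 2)
  · intro a ha
    simp only [Finset.mem_Icc] at *
    split_ifs <;> omega
  · intro a ha
    simp only [Finset.mem_Icc] at *
    split_ifs <;> omega
  · intro a ha
    simp only [Finset.mem_Icc] at ha
    split_ifs <;> omega
  · intro a ha
    simp only [Finset.mem_Icc] at ha
    split_ifs <;> omega
  · intro a _
    rfl

private lemma aux_gauss (n : ℕ) : (∑ y ∈ Finset.Icc 1 n, y) * 2 = n * (n + 1) := by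
  induction n with
  | zero => simp
  | succ k ih =>
    rw [Finset.sum_Icc_succ_top (by omega), add_mul, ih]
    ring

open scoped Classical in
/-- For a prime `p ≡ 7 (mod 8)`, the sum of the non-residues of `p`
in `[1, (p-1)/2]` equals `(p² - 1)/16`. -/
theorem sum_small_nonresidues_eq_of_prime_mod_eight_eq_seven
    (p : ℕ) (hp : p.Prime) (hmod : p % 8 = 7) :
    ∑ y ∈ (Finset.Icc 1 ((p - 1) / 2)).filter
        (fun y => ¬ ∃ x : ℤ, x ^ 2 ≡ (y : ℤ) [ZMOD (p : ℤ)]), y =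
      (p ^ 2 - 1) / 16 := by
  classical
  haveI : Fact p.Prime := ⟨hp⟩
  have hp7 : 7 ≤ p := by omega
  set m := (p - 1) / 2 with hm
  have hpm : p = 2 * m + 1 := by omega
  set S := Finset.Icc 1 m with hSdef
  have hsets : Finset.filter (fun y : ℤ => ¬ ∃ x : ℤ, x ^ 2 ≡ y [ZMOD (p : ℤ)])
        (do let a ← S; pure ((a : ℤ)))
      = (S.filter (fun y : ℕ => ¬ IsSquare ((y : ZMod p)))).image (fun a : ℕ => (a : ℤ)) := by
    ext z
    simp only [Finset.mem_filter, Finset.mem_image, Finset.bind_def, Finset.mem_sup,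
      Finset.pure_def, Finset.mem_singleton]
    constructor
    · rintro ⟨⟨a, ha, rfl⟩, hz⟩
      exact ⟨a, ⟨ha, fun hsq => hz ((aux_pred p a).2 hsq)⟩, rfl⟩
    · rintro ⟨a, ⟨ha, hna⟩, rfl⟩
      exact ⟨⟨a, ha, rfl⟩, fun hex => hna ((aux_pred p a).1 hex)⟩
  rw [hsets, Finset.sum_image (fun x _ y _ h => by exact_mod_cast h)]
  have hfin : ∑ y ∈ S.filter (fun y : ℕ => ¬ IsSquare ((y : ZMod p))), ((y : ℕ) : ℤ)
      = ((∑ y ∈ S.filter (fun y : ℕ => ¬ IsSquare ((y : ZMod p))), y : ℕ) : ℤ) := by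
    push_cast; rfl
  rw [hfin]
  -- the rearrangement identity specialized
  have key : ∀ F : ℕ → ℤ, ∑ z ∈ S, F z
      = ∑ y ∈ S.filter (fun y => 2 * y ≤ m), F (2 * y)
        + ∑ y ∈ S.filter (fun y => ¬ 2 * y ≤ m), F (p - 2 * y) := by
    intro F
    rw [← aux_rearrange hpm F]
    simp_rw [apply_ite F]
    exact Finset.sum_ite _ _
  -- notation for the six basic quantities
  set S₁ := S.filter (fun y => 2 * y ≤ m) with hS₁
  set S₂ := S.filter (fun y => ¬ 2 * y ≤ m) with hS₂
  have hS₁mem : ∀ y ∈ S₁, 1 ≤ y ∧ y ≤ m ∧ 2 * y ≤ m := by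
    intro y hy
    rw [hS₁, Finset.mem_filter, hSdef, Finset.mem_Icc] at hy
    omega
  have hS₂mem : ∀ y ∈ S₂, 1 ≤ y ∧ y ≤ m ∧ ¬ 2 * y ≤ m := by
    intro y hy
    rw [hS₂, Finset.mem_filter, hSdef, Finset.mem_Icc] at hy
    omega
  set a1 : ℤ := ∑ y ∈ S₁, (if IsSquare ((y : ZMod p)) then 0 else (y : ℤ)) with ha1
  set r1 : ℤ := ∑ y ∈ S₁, (if IsSquare ((y : ZMod p)) then (y : ℤ) else 0) with hr1
  set a2 : ℤ := ∑ y ∈ S₂, (if IsSquare ((y : ZMod p)) then 0 else (y : ℤ)) with ha2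
  set r2 : ℤ := ∑ y ∈ S₂, (if IsSquare ((y : ZMod p)) then (y : ℤ) else 0) with hr2
  set n2 : ℤ := ∑ y ∈ S₂, (if IsSquare ((y : ZMod p)) then 0 else (1 : ℤ)) with hn2
  set q2 : ℤ := ∑ y ∈ S₂, (if IsSquare ((y : ZMod p)) then (1 : ℤ) else 0) with hq2
  -- equation from rearranging the nonresidue sum
  have eN : a1 + a2 = 2 * a1 + ((p : ℤ) * q2 - 2 * r2) := by
    have h0 := key (fun z => if IsSquare ((z : ZMod p)) then 0 else (z : ℤ))
    have hL : ∑ z ∈ S, (if IsSquare ((z : ZMod p)) then 0 else (z : ℤ)) = a1 + a2 :=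
      (Finset.sum_filter_add_sum_filter_not S _ _).symm
    have h1 : ∑ y ∈ S₁, (if IsSquare (((2 * y : ℕ)) : ZMod p) then 0 else ((2 * y : ℕ) : ℤ))
        = 2 * a1 := by
      rw [ha1, Finset.mul_sum]
      refine Finset.sum_congr rfl fun y hy => ?_
      obtain ⟨hy1, hy2, hy3⟩ := hS₁mem y hy
      simp only [aux_two_mul hmod hy1 (show 2 * y < p by omega)]
      by_cases h : IsSquare ((y : ZMod p)) <;> simp [h] <;> push_cast <;> ring
    have h2 : ∑ y ∈ S₂, (if IsSquare (((p - 2 * y : ℕ)) : ZMod p) then 0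
          else ((p - 2 * y : ℕ) : ℤ))
        = (p : ℤ) * q2 - 2 * r2 := by
      rw [hq2, hr2, Finset.mul_sum, Finset.mul_sum, ← Finset.sum_sub_distrib]
      refine Finset.sum_congr rfl fun y hy => ?_
      obtain ⟨hy1, hy2, hy3⟩ := hS₂mem y hy
      simp only [aux_neg hmod hy1 (show 2 * y < p by omega)]
      have hc : ((p - 2 * y : ℕ) : ℤ) = (p : ℤ) - 2 * y := by
        have : 2 * y ≤ p := by omega
        push_cast [this]
        ring
      by_cases h : IsSquare ((y : ZMod p)) <;> simp [h, hc] <;> ring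
    rw [hL, h1, h2] at h0
    exact h0
  -- equation from rearranging the residue sum
  have eR : r1 + r2 = 2 * r1 + ((p : ℤ) * n2 - 2 * a2) := by
    have h0 := key (fun z => if IsSquare ((z : ZMod p)) then (z : ℤ) else 0)
    have hL : ∑ z ∈ S, (if IsSquare ((z : ZMod p)) then (z : ℤ) else 0) = r1 + r2 :=
      (Finset.sum_filter_add_sum_filter_not S _ _).symm
    have h1 : ∑ y ∈ S₁, (if IsSquare (((2 * y : ℕ)) : ZMod p) then ((2 * y : ℕ) : ℤ) else 0)
        = 2 * r1 := by
      rw [hr1, Finset.mul_sum]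
      refine Finset.sum_congr rfl fun y hy => ?_
      obtain ⟨hy1, hy2, hy3⟩ := hS₁mem y hy
      simp only [aux_two_mul hmod hy1 (show 2 * y < p by omega)]
      by_cases h : IsSquare ((y : ZMod p)) <;> simp [h] <;> push_cast <;> ring
    have h2 : ∑ y ∈ S₂, (if IsSquare (((p - 2 * y : ℕ)) : ZMod p) then ((p - 2 * y : ℕ) : ℤ)
          else 0)
        = (p : ℤ) * n2 - 2 * a2 := by
      rw [hn2, ha2, Finset.mul_sum, Finset.mul_sum, ← Finset.sum_sub_distrib]
      refine Finset.sum_congr rfl fun y hy => ?_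
      obtain ⟨hy1, hy2, hy3⟩ := hS₂mem y hy
      simp only [aux_neg hmod hy1 (show 2 * y < p by omega)]
      have hc : ((p - 2 * y : ℕ) : ℤ) = (p : ℤ) - 2 * y := by
        have : 2 * y ≤ p := by omega
        push_cast [this]
        ring
      by_cases h : IsSquare ((y : ZMod p)) <;> simp [h, hc] <;> ring
    rw [hL, h1, h2] at h0
    exact h0
  -- counting equation : n2 = q2
  have eC : n2 = q2 := by
    have h0 := key (fun z => if IsSquare ((z : ZMod p)) then 0 else (1 : ℤ))
    have hL : ∑ z ∈ S, (if IsSquare ((z : ZMod p)) then 0 else (1 : ℤ))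
        = (∑ y ∈ S₁, (if IsSquare ((y : ZMod p)) then 0 else (1 : ℤ))) + n2 :=
      (Finset.sum_filter_add_sum_filter_not S _ _).symm
    have h1 : ∑ y ∈ S₁, (if IsSquare (((2 * y : ℕ)) : ZMod p) then 0 else (1 : ℤ))
        = ∑ y ∈ S₁, (if IsSquare ((y : ZMod p)) then 0 else (1 : ℤ)) := by
      refine Finset.sum_congr rfl fun y hy => ?_
      obtain ⟨hy1, hy2, hy3⟩ := hS₁mem y hy
      simp only [aux_two_mul hmod hy1 (show 2 * y < p by omega)]
    have h2 : ∑ y ∈ S₂, (if IsSquare (((p - 2 * y : ℕ)) : ZMod p) then 0 else (1 : ℤ))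
        = q2 := by
      rw [hq2]
      refine Finset.sum_congr rfl fun y hy => ?_
      obtain ⟨hy1, hy2, hy3⟩ := hS₂mem y hy
      simp only [aux_neg hmod hy1 (show 2 * y < p by omega)]
      by_cases h : IsSquare ((y : ZMod p)) <;> simp [h]
    rw [hL, h1, h2] at h0
    linarith
  -- ΣN = ΣR
  have hNR : a1 + a2 = r1 + r2 := by
    have hpq : (p : ℤ) * n2 = (p : ℤ) * q2 := by rw [eC]
    linarith
  -- total sum
  have htot : (a1 + a2) + (r1 + r2) = ∑ y ∈ S, (y : ℤ) := by
    have hA : a1 + a2 = ∑ y ∈ S, (if IsSquare ((y : ZMod p)) then 0 else (y : ℤ)) :=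
      Finset.sum_filter_add_sum_filter_not S _ _
    have hB : r1 + r2 = ∑ y ∈ S, (if IsSquare ((y : ZMod p)) then (y : ℤ) else 0) :=
      Finset.sum_filter_add_sum_filter_not S _ _
    rw [hA, hB, ← Finset.sum_add_distrib]
    refine Finset.sum_congr rfl fun y _ => ?_
    by_cases h : IsSquare ((y : ZMod p)) <;> simp [h]
  have hgauss : 2 * ∑ y ∈ S, (y : ℤ) = (m : ℤ) * (m + 1) := by
    have h1 : ∑ y ∈ S, (y : ℤ) = ((∑ y ∈ S, y : ℕ) : ℤ) := by push_cast; rfl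
    have h2 : (∑ y ∈ Finset.Icc 1 m, y) * 2 = m * (m + 1) := aux_gauss m
    rw [h1, hSdef]
    exact_mod_cast by
      have := h2
      omega
  -- connect to the goal
  have hcastsum : ((∑ y ∈ S.filter (fun y : ℕ => ¬ IsSquare ((y : ZMod p))), y : ℕ) : ℤ)
      = a1 + a2 := by
    rw [Nat.cast_sum]
    rw [Finset.sum_filter]
    have hA : a1 + a2 = ∑ y ∈ S, (if IsSquare ((y : ZMod p)) then 0 else (y : ℤ)) :=
      Finset.sum_filter_add_sum_filter_not S _ _
    rw [hA]
    refine Finset.sum_congr rfl fun y _ => ?_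
    by_cases h : IsSquare ((y : ZMod p)) <;> simp [h]
  have h4 : 4 * ((∑ y ∈ S.filter (fun y : ℕ => ¬ IsSquare ((y : ZMod p))), y : ℕ) : ℤ)
      = (m : ℤ) * (m + 1) := by
    rw [hcastsum]
    linarith
  have hpsq : ((p : ℤ)) ^ 2 = 4 * ((m : ℤ) * m) + 4 * m + 1 := by
    have hc : (p : ℤ) = 2 * (m : ℤ) + 1 := by exact_mod_cast hpm
    rw [hc]; ring
  rw [hpsq]
  have h16 : (4 * ((m : ℤ) * m) + 4 * (m : ℤ) + 1 - 1)
      = 16 * ((∑ y ∈ S.filter (fun y : ℕ => ¬ IsSquare ((y : ZMod p))), y : ℕ) : ℤ) := by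
    linarith [h4]
  rw [h16, Int.mul_ediv_cancel_left _ (by norm_num)]
end

section
/- Let p be a prime with p ≡ 3 (mod 4) and p ≥ 7, and let k ≥ 2. Then the number of quadratic residues modulo p^k lying in [1, (p^k−1)/2] is strictly less than (p^k − 1)/4, i.e. 4·R_b(p^k) < p^k − 1. -/
open Finset in
private lemma aux_exists_nonsquare (p : ℕ) (hp : p.Prime) (hmod : p % 4 = 3) (hge : 7 ≤ p) :
    ∃ t ∈ Finset.Icc 1 ((p - 1) / 2), ¬ IsSquare ((t : ℕ) : ZMod p) := by
  haveI : Fact p.Prime := ⟨hp⟩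
  by_contra hcon
  push_neg at hcon
  have hr : 3 ≤ (p - 1) / 2 := by omega
  have h2 := hcon 2 (by rw [Finset.mem_Icc]; omega)
  have hr' := hcon ((p - 1) / 2) (by rw [Finset.mem_Icc]; omega)
  have hmul : IsSquare (((2 * ((p - 1) / 2) : ℕ)) : ZMod p) := by
    push_cast
    exact h2.mul hr'
  have h2r : 2 * ((p - 1) / 2) = p - 1 := by omega
  rw [h2r] at hmul
  have hneg : ((p - 1 : ℕ) : ZMod p) = -1 := by
    rw [Nat.cast_sub hp.one_le, ZMod.natCast_self, Nat.cast_one, zero_sub]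
  rw [hneg] at hmul
  exact (ZMod.exists_sq_eq_neg_one_iff.mp hmul) hmod

open Finset in
private lemma aux_card_sq (p : ℕ) (hp : p.Prime) (hodd : p % 2 = 1)
    [DecidablePred fun t : ℕ => IsSquare ((t : ℕ) : ZMod p)] :
    ((Finset.Icc 1 (p - 1)).filter (fun t => IsSquare ((t : ℕ) : ZMod p))).card
      ≤ (p - 1) / 2 := by
  haveI : Fact p.Prime := ⟨hp⟩
  haveI : NeZero p := ⟨hp.pos.ne'⟩
  classical
  set r := (p - 1) / 2 with hrdef
  have h2p := hp.two_le
  have hp3 : 3 ≤ p := by omega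
  have hsub : ((Finset.Icc 1 (p - 1)).filter (fun t => IsSquare ((t : ℕ) : ZMod p))) ⊆
      (Finset.Icc 1 r).image (fun x => x ^ 2 % p) := by
    intro t ht
    simp only [Finset.mem_filter, Finset.mem_Icc] at ht
    obtain ⟨⟨ht1, ht2⟩, c, hc⟩ := ht
    have htp : t < p := by omega
    have htne : ((t : ℕ) : ZMod p) ≠ 0 := by
      rw [Ne, ZMod.natCast_eq_zero_iff]
      intro hdvd
      have := Nat.le_of_dvd (by omega) hdvd
      omega
    have hc0 : c ≠ 0 := by
      rintro rfl
      rw [mul_zero] at hc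
      exact htne hc
    have hvlt : c.val < p := ZMod.val_lt c
    have hv0 : c.val ≠ 0 := fun h => hc0 ((ZMod.val_eq_zero c).mp h)
    have hvcast : ((c.val : ℕ) : ZMod p) = c := ZMod.natCast_zmod_val c
    set x : ℕ := if c.val ≤ r then c.val else p - c.val with hxdef
    have hxmem : x ∈ Finset.Icc 1 r := by
      rw [Finset.mem_Icc, hxdef]
      split <;> omega
    have hxsq : ((x : ℕ) : ZMod p) = c ∨ ((x : ℕ) : ZMod p) = -c := by
      rw [hxdef]
      split
      · exact Or.inl hvcast
      · right
        rw [Nat.cast_sub (le_of_lt hvlt), ZMod.natCast_self, hvcast, zero_sub]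
    have hx2 : ((x ^ 2 : ℕ) : ZMod p) = ((t : ℕ) : ZMod p) := by
      push_cast
      rcases hxsq with h | h <;> rw [h, hc] <;> ring
    refine Finset.mem_image.mpr ⟨x, hxmem, ?_⟩
    have := (ZMod.natCast_eq_natCast_iff' _ _ _).mp hx2
    rwa [Nat.mod_eq_of_lt htp] at this
  calc ((Finset.Icc 1 (p - 1)).filter (fun t => IsSquare ((t : ℕ) : ZMod p))).card
      ≤ ((Finset.Icc 1 r).image (fun x => x ^ 2 % p)).card := Finset.card_le_card hsub
    _ ≤ (Finset.Icc 1 r).card := Finset.card_image_le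
    _ = r := by rw [Nat.card_Icc]; omega

private lemma aux_key (p K : ℕ) (hge : 7 ≤ p) : p + 2 * p ^ K < p ^ (K + 1) + 6 := by
  cases K with
  | zero =>
    have h0 : p ^ (0 + 1) = p := by norm_num
    have h1 : p ^ 0 = 1 := pow_zero p
    omega
  | succ J =>
    have h1 : p ≤ p ^ (J + 1) := Nat.le_self_pow (by omega) p
    have h2 : 7 * p ^ (J + 1) ≤ p ^ (J + 2) := by
      calc 7 * p ^ (J + 1) ≤ p * p ^ (J + 1) := Nat.mul_le_mul_right _ hge
        _ = p ^ (J + 2) := by ring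
    have h3 : p ^ (J + 1 + 1) = p ^ (J + 2) := by ring
    omega

open scoped Classical in
/-- For a prime `p ≡ 3 (mod 4)` with `p ≥ 7` and `k ≥ 2`, the number of quadratic
residues modulo `p^k` (squares that are nonzero mod `p^k`) lying in
`[1, (p^k - 1)/2]` is strictly less than `(p^k - 1)/4`. -/
theorem four_mul_small_residues_card_pow_lt_of_prime_mod_four_eq_three
    (p : ℕ) (hp : p.Prime) (hmod : p % 4 = 3) (hge : 7 ≤ p) (k : ℕ) (hk : 2 ≤ k) :
    4 * ((Finset.Icc 1 ((p ^ k - 1) / 2)).filter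
        (fun y => (∃ x : ℤ, x ^ 2 ≡ (y : ℤ) [ZMOD ((p : ℤ) ^ k)]) ∧
          ¬ ((y : ℤ) ≡ 0 [ZMOD ((p : ℤ) ^ k)]))).card <
      p ^ k - 1 := by
  haveI : Fact p.Prime := ⟨hp⟩
  obtain ⟨K, rfl⟩ : ∃ K, k = K + 2 := ⟨k - 2, by omega⟩
  have hppos : 0 < p := hp.pos
  have hodd : p % 2 = 1 := by omega
  have hoddp : Odd p := Nat.odd_iff.mpr hodd
  have hoK : p ^ K % 2 = 1 := Nat.odd_iff.mp (hoddp.pow)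
  have hoK1 : p ^ (K + 1) % 2 = 1 := Nat.odd_iff.mp (hoddp.pow)
  have hoK2 : p ^ (K + 2) % 2 = 1 := Nat.odd_iff.mp (hoddp.pow)
  have hpK : 1 ≤ p ^ K := Nat.one_le_pow _ _ hppos
  have hpK1 : 1 ≤ p ^ (K + 1) := Nat.one_le_pow _ _ hppos
  have hpK2 : 1 ≤ p ^ (K + 2) := Nat.one_le_pow _ _ hppos
  set r := (p - 1) / 2 with hrdef
  set q := (p ^ (K + 1) - 1) / 2 with hqdef
  set s := (p ^ K - 1) / 2 with hsdef
  set M := (p ^ (K + 2) - 1) / 2 with hMdef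
  have hr3 : 3 ≤ r := by omega
  have hrp : 2 * r + 1 = p := by omega
  have hq1 : 2 * q + 1 = p ^ (K + 1) := by omega
  have hs1 : 2 * s + 1 = p ^ K := by omega
  have hM1 : 2 * M + 1 = p ^ (K + 2) := by omega
  -- M = 2qr + q + r
  have hMexp : 2 * M + 1 = 2 * (2 * q * r + q + r) + 1 := by
    rw [hM1]
    calc p ^ (K + 2) = p * p ^ (K + 1) := by ring
      _ = (2 * r + 1) * (2 * q + 1) := by rw [hrp, hq1]
      _ = 2 * (2 * q * r + q + r) + 1 := by ring
  have hMqr : M = 2 * q * r + q + r := by omega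
  have hMpq : M = p * q + r := by
    have : p * q = 2 * q * r + q := by rw [← hrp]; ring
    omega
  -- M / p^2 = s
  have hw2 : 2 * M + 1 = 2 * (p ^ 2 * s) + p ^ 2 := by
    rw [hM1]
    calc p ^ (K + 2) = p ^ 2 * p ^ K := by ring
      _ = p ^ 2 * (2 * s + 1) := by rw [hs1]
      _ = 2 * (p ^ 2 * s) + p ^ 2 := by ring
  have hp2pos : 0 < p ^ 2 := Nat.pow_pos hppos
  have hMps : M = p ^ 2 * s + (p ^ 2 - 1) / 2 := by
    have h2 : p ^ 2 % 2 = 1 := Nat.odd_iff.mp (hoddp.pow)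
    omega
  have hMdiv : M / p ^ 2 = s := by
    rw [hMps, Nat.mul_add_div hp2pos, Nat.div_eq_of_lt (by omega), add_zero]
  -- the sets
  set QRall := (Finset.Icc 1 (p - 1)).filter (fun t => IsSquare ((t : ℕ) : ZMod p)) with hQa
  set QRlow := (Finset.Icc 1 r).filter (fun t => IsSquare ((t : ℕ) : ZMod p)) with hQl
  set T := (Finset.Icc 1 M).filter
      (fun y => ¬ p ∣ y ∧ IsSquare ((y : ℕ) : ZMod p)) with hT
  set D := (Finset.Icc 1 M).filter (fun y => p ^ 2 ∣ y) with hD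
  set S := (Finset.Icc 1 M).filter
      (fun y : ℕ => (∃ x : ℤ, x ^ 2 ≡ (y : ℤ) [ZMOD ((p : ℤ) ^ (K + 2))]) ∧
        ¬ ((y : ℤ) ≡ 0 [ZMOD ((p : ℤ) ^ (K + 2))])) with hS
  have hpint : Prime ((p : ℤ)) := Nat.prime_iff_prime_int.mp hp
  -- S ⊆ T ∪ D
  have hSsub : S ⊆ T ∪ D := by
    intro y hy
    rw [hS, Finset.mem_filter] at hy
    obtain ⟨hyIcc, ⟨x, hx⟩, h0⟩ := hy
    have hxp : x ^ 2 ≡ (y : ℤ) [ZMOD ((p : ℤ))] :=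
      hx.of_dvd (dvd_pow_self _ (by omega : K + 2 ≠ 0))
    rw [Finset.mem_union]
    by_cases hpy : p ∣ y
    · right
      rw [hD, Finset.mem_filter]
      refine ⟨hyIcc, ?_⟩
      have hpzy : ((p : ℤ)) ∣ (y : ℤ) := Int.natCast_dvd_natCast.mpr hpy
      have hpx2 : ((p : ℤ)) ∣ x ^ 2 :=
        (Int.modEq_zero_iff_dvd).mp (hxp.trans ((Int.modEq_zero_iff_dvd).mpr hpzy))
      have hpx : ((p : ℤ)) ∣ x := hpint.dvd_of_dvd_pow hpx2
      have hp2x2 : ((p : ℤ)) ^ 2 ∣ x ^ 2 := pow_dvd_pow_of_dvd hpx 2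
      have hx2 : x ^ 2 ≡ (y : ℤ) [ZMOD ((p : ℤ)) ^ 2] :=
        hx.of_dvd (pow_dvd_pow _ (by omega : 2 ≤ K + 2))
      have hdy : ((p : ℤ)) ^ 2 ∣ (y : ℤ) :=
        (Int.modEq_zero_iff_dvd).mp
          ((hx2.symm).trans ((Int.modEq_zero_iff_dvd).mpr hp2x2))
      have : ((p ^ 2 : ℕ) : ℤ) ∣ (y : ℤ) := by push_cast; exact hdy
      exact_mod_cast this
    · left
      rw [hT, Finset.mem_filter]
      refine ⟨hyIcc, hpy, ?_⟩
      have hcast : ((x ^ 2 : ℤ) : ZMod p) = (((y : ℤ)) : ZMod p) := by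
        have := (ZMod.intCast_eq_intCast_iff (x ^ 2) ((y : ℤ)) p).mpr
        apply this
        simpa using hxp
      have : ((x : ℤ) : ZMod p) ^ 2 = ((y : ℕ) : ZMod p) := by
        push_cast at hcast
        simpa using hcast
      exact ⟨((x : ℤ) : ZMod p), by rw [← this]; ring⟩
  -- card D
  have hDcard : D.card = s := by
    rw [hD]
    have hIoc : Finset.Icc 1 M = Finset.Ioc 0 M := by
      ext z; simp [Nat.lt_iff_add_one_le]
    rw [hIoc, ← hMdiv]
    exact Nat.Ioc_filter_dvd_card_eq_div M (p ^ 2)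
  -- card T
  have hTcard : T.card ≤ q * QRall.card + QRlow.card := by
    have hinj : Set.InjOn (fun y : ℕ => (y / p, y % p)) T := by
      intro a _ b _ hab
      simp only [Prod.mk.injEq] at hab
      have h1 := Nat.div_add_mod a p
      have h2 := Nat.div_add_mod b p
      obtain ⟨hd, hm⟩ := hab
      calc a = p * (a / p) + a % p := h1.symm
        _ = p * (b / p) + b % p := by rw [hd, hm]
        _ = b := h2
    have hmaps : ∀ y ∈ T, (y / p, y % p) ∈
        (Finset.range q ×ˢ QRall) ∪ ({q} ×ˢ QRlow) := by
      intro y hy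
      rw [hT, Finset.mem_filter, Finset.mem_Icc] at hy
      obtain ⟨⟨hy1, hyM⟩, hpy, hsq⟩ := hy
      have hmod0 : y % p ≠ 0 := fun h => hpy (Nat.dvd_of_mod_eq_zero h)
      have hmodlt : y % p < p := Nat.mod_lt _ hppos
      have hsq' : IsSquare (((y % p : ℕ)) : ZMod p) := by
        rwa [ZMod.natCast_mod]
      have hdm := Nat.div_add_mod y p
      have hdivle : y / p ≤ q := by
        by_contra hcon
        push_neg at hcon
        have : p * (q + 1) ≤ p * (y / p) := Nat.mul_le_mul_left _ hcon
        have hpq1 : p * (q + 1) = p * q + p := by ring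
        omega
      rcases lt_or_eq_of_le hdivle with hlt | heq
      · apply Finset.mem_union_left
        rw [Finset.mem_product]
        refine ⟨Finset.mem_range.mpr hlt, ?_⟩
        rw [hQa, Finset.mem_filter, Finset.mem_Icc]
        exact ⟨⟨by omega, by omega⟩, hsq'⟩
      · apply Finset.mem_union_right
        rw [Finset.mem_product]
        refine ⟨Finset.mem_singleton.mpr heq, ?_⟩
        rw [hQl, Finset.mem_filter, Finset.mem_Icc]
        have hple : y % p ≤ r := by
          rw [heq] at hdm
          omega
        exact ⟨⟨by omega, hple⟩, hsq'⟩
    calc T.card ≤ ((Finset.range q ×ˢ QRall) ∪ ({q} ×ˢ QRlow)).card :=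
          Finset.card_le_card_of_injOn _ hmaps hinj
      _ ≤ (Finset.range q ×ˢ QRall).card + (({q} : Finset ℕ) ×ˢ QRlow).card :=
          Finset.card_union_le _ _
      _ = q * QRall.card + QRlow.card := by
          rw [Finset.card_product, Finset.card_product, Finset.card_range,
            Finset.card_singleton, one_mul]
  have hQallcard : QRall.card ≤ r := aux_card_sq p hp hodd
  have hQlowcard : QRlow.card ≤ r - 1 := by
    obtain ⟨t, htmem, htns⟩ := aux_exists_nonsquare p hp hmod hge
    have hsub : QRlow ⊆ (Finset.Icc 1 r).erase t := by
      intro u hu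
      rw [hQl, Finset.mem_filter] at hu
      refine Finset.mem_erase.mpr ⟨?_, hu.1⟩
      rintro rfl
      exact htns hu.2
    calc QRlow.card ≤ ((Finset.Icc 1 r).erase t).card := Finset.card_le_card hsub
      _ = (Finset.Icc 1 r).card - 1 := Finset.card_erase_of_mem htmem
      _ = r - 1 := by rw [Nat.card_Icc]; omega
  -- assembling
  have hScard : S.card ≤ T.card + D.card :=
    le_trans (Finset.card_le_card hSsub) (Finset.card_union_le _ _)
  have hkey : p + 2 * p ^ K < p ^ (K + 1) + 6 := aux_key p K hge
  have hlin : 4 * (r - 1) + 4 * s < 2 * q + 2 * r := by omega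
  have h1 : T.card ≤ q * r + (r - 1) :=
    hTcard.trans (Nat.add_le_add (Nat.mul_le_mul_left q hQallcard) hQlowcard)
  have h2 : S.card ≤ (q * r + (r - 1)) + s := by
    rw [← hDcard]
    exact hScard.trans (Nat.add_le_add_right h1 _)
  have hfinal : 4 * S.card < 2 * M := by
    calc 4 * S.card ≤ 4 * ((q * r + (r - 1)) + s) := Nat.mul_le_mul_left 4 h2
      _ = 4 * (q * r) + (4 * (r - 1) + 4 * s) := by ring
      _ < 4 * (q * r) + (2 * q + 2 * r) := Nat.add_lt_add_left hlin _
      _ = 2 * M := by rw [hMqr]; ring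
  -- identify the goal's (ℤ-valued) set with S
  set Sz := (Finset.Icc 1 M).filter
      (fun y => (∃ x : ℤ, x ^ 2 ≡ (y : ℤ) [ZMOD ((p : ℤ) ^ (K + 2))]) ∧
        ¬ ((y : ℤ) ≡ 0 [ZMOD ((p : ℤ) ^ (K + 2))])) with hSz
  have hmem_iff : ∀ z : ℤ,
      (z ∈ ((Finset.Icc 1 M) >>= fun a : ℕ => (pure (a : ℤ) : Finset ℤ))) ↔
        ∃ a : ℕ, (1 ≤ a ∧ a ≤ M) ∧ (a : ℤ) = z := by
    intro z
    simp [Finset.bind_def, Finset.mem_sup]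
  have hcardeq : S.card = Sz.card := by
    refine Finset.card_bij (fun (a : ℕ) _ => (a : ℤ)) ?_ ?_ ?_
    · intro a ha
      rw [hS, Finset.mem_filter] at ha
      rw [hSz, Finset.mem_filter]
      refine ⟨?_, ha.2⟩
      have hIcc := Finset.mem_Icc.mp ha.1
      exact (hmem_iff _).mpr ⟨a, ⟨hIcc.1, hIcc.2⟩, rfl⟩
    · intro a _ b _ h
      exact Nat.cast_inj.mp h
    · intro b hb
      rw [hSz, Finset.mem_filter] at hb
      obtain ⟨hbmem, hbp⟩ := hb
      obtain ⟨a, ⟨ha1, ha2⟩, rfl⟩ := (hmem_iff _).mp hbmem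
      refine ⟨a, ?_, rfl⟩
      rw [hS, Finset.mem_filter]
      exact ⟨Finset.mem_Icc.mpr ⟨ha1, ha2⟩, hbp⟩
  omega
end
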